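/- arXiv:2006.10483 — 5 statements merged into one kernel-verified Lean document; each statement's English description precedes it below -/
import Mathlib

section
/- (Proposition: characterization for binary sensitive attribute.) Suppose S takes values in {0,1}. The random variables Z and S are conditionally independent given F if and only if, for every measurable function h̃ : 𝒳_Z × 𝒳_F → ℝ with E[h̃(Z,F)²] < ∞ and E[h̃(Z,F) | σ(F)] = 0 almost surely, one has E[𝟙{S=1} · h̃(Z,F)] = 0. -/
open MeasureTheory ProbabilityTheory
open scoped ENNReal

section Aux

variable {Ω : Type*} {m : MeasurableSpace Ω} [mΩ : MeasurableSpace Ω] {P : Measure Ω}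
  [IsFiniteMeasure P]

/-- Pull-out property at the level of set integrals. -/
lemma aux_pullout (hm : m ≤ mΩ) {Y g : Ω → ℝ}
    (hY : StronglyMeasurable[m] Y)
    (hYg : Integrable (fun ω => Y ω * g ω) P) (hg : Integrable g P) {A : Set Ω}
    (hA : MeasurableSet[m] A) :
    ∫ ω in A, Y ω * g ω ∂P = ∫ ω in A, Y ω * (P[g|m]) ω ∂P := by
  have hYg : Integrable (Y * g) P := hYg
  have h1 : P[Y * g|m] =ᵐ[P] Y * P[g|m] := condExp_mul_of_stronglyMeasurable_left hY hYg hg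
  have h2 := setIntegral_condExp hm hYg hA
  calc ∫ ω in A, Y ω * g ω ∂P = ∫ ω in A, (P[Y * g|m]) ω ∂P := h2.symm
    _ = ∫ ω in A, Y ω * (P[g|m]) ω ∂P := by
        refine setIntegral_congr_ae (hm A hA) ?_
        filter_upwards [h1] with ω hω _ using hω

lemma aux_condExp_indicator_bound (hm : m ≤ mΩ) {B : Set Ω}
    (hB : MeasurableSet[mΩ] B) :
    ∀ᵐ ω ∂P, ‖(P[B.indicator (fun _ => (1:ℝ))|m]) ω‖ ≤ 1 := by
  have hint : Integrable (B.indicator (fun _ => (1:ℝ))) P := (integrable_const 1).indicator hB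
  have h0 : 0 ≤ᵐ[P] P[B.indicator (fun _ => (1:ℝ))|m] :=
    condExp_nonneg (Filter.Eventually.of_forall fun ω => by
      by_cases hω : ω ∈ B <;> simp [Set.indicator_apply, hω])
  have h1 : P[B.indicator (fun _ => (1:ℝ))|m] ≤ᵐ[P] P[(fun _ => (1:ℝ))|m] :=
    condExp_mono hint (integrable_const 1) (Filter.Eventually.of_forall fun ω => by
      by_cases hω : ω ∈ B <;> simp [Set.indicator_apply, hω])
  rw [condExp_const hm] at h1
  filter_upwards [h0, h1] with ω hω0 hω1
  rw [Real.norm_eq_abs, abs_le]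
  have h0' : (0:ℝ) ≤ (P[B.indicator (fun _ => (1:ℝ))|m]) ω := by simpa using hω0
  exact ⟨by linarith, hω1⟩

end Aux

/-- From the key product identity for the event `{S = 1}`, conditional independence follows
when `S` is `{0,1}`-valued. -/
lemma aux_CI_of_key {Ω XF XZ : Type*} [mΩ : MeasurableSpace Ω] [StandardBorelSpace Ω]
    [MeasurableSpace XF] [MeasurableSpace XZ]
    (P : Measure Ω) [IsProbabilityMeasure P]
    {S : Ω → ℝ} (hS : Measurable S) (hS01 : ∀ ω, S ω = 0 ∨ S ω = 1)
    {F : Ω → XF} (hF : Measurable F) {Z : Ω → XZ} (hZ : Measurable Z)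
    (hkey : ∀ s : Set XZ, MeasurableSet s →
      (P⟦Z ⁻¹' s ∩ S ⁻¹' {1} | MeasurableSpace.comap F inferInstance⟧) =ᵐ[P]
        fun ω => (P⟦Z ⁻¹' s | MeasurableSpace.comap F inferInstance⟧) ω *
          (P⟦S ⁻¹' {1} | MeasurableSpace.comap F inferInstance⟧) ω) :
    CondIndepFun (MeasurableSpace.comap F inferInstance) hF.comap_le Z S P := by
  rw [condIndepFun_iff_condExp_inter_preimage_eq_mul hZ hS]
  intro s t hs ht
  have hmF : MeasurableSpace.comap F inferInstance ≤ mΩ := hF.comap_le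
  have hB : MeasurableSet[mΩ] (S ⁻¹' {1}) := hS (measurableSet_singleton 1)
  have hZs : MeasurableSet[mΩ] (Z ⁻¹' s) := hZ hs
  by_cases h1t : (1:ℝ) ∈ t <;> by_cases h0t : (0:ℝ) ∈ t
  · -- `S ⁻¹' t = univ`
    have hteq : S ⁻¹' t = Set.univ := by
      ext ω
      simp only [Set.mem_preimage, Set.mem_univ, iff_true]
      rcases hS01 ω with h | h <;> rw [h] <;> assumption
    rw [hteq, Set.inter_univ, Set.indicator_univ, condExp_const hmF]
    filter_upwards with ω
    simp
  · -- `S ⁻¹' t = {S = 1}`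
    have hteq : S ⁻¹' t = S ⁻¹' {1} := by
      ext ω
      rcases hS01 ω with h | h <;> simp [h, h0t, h1t]
    rw [hteq]
    exact hkey s hs
  · -- `S ⁻¹' t = {S = 1}ᶜ`
    have hteq : S ⁻¹' t = (S ⁻¹' {1})ᶜ := by
      ext ω
      rcases hS01 ω with h | h <;> simp [h, h0t, h1t]
    rw [hteq]
    have hind1 : (Z ⁻¹' s ∩ (S ⁻¹' {1})ᶜ).indicator (fun _ => (1:ℝ)) =
        fun ω => (Z ⁻¹' s).indicator (fun _ => (1:ℝ)) ω -
          (Z ⁻¹' s ∩ S ⁻¹' {1}).indicator (fun _ => (1:ℝ)) ω := by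
      funext ω
      by_cases hω1 : ω ∈ Z ⁻¹' s <;> by_cases hω2 : ω ∈ S ⁻¹' {1} <;>
        simp [Set.indicator_apply, hω1, hω2]
    have hind2 : ((S ⁻¹' {1})ᶜ).indicator (fun _ => (1:ℝ)) =
        fun ω => (fun _ => (1:ℝ)) ω - (S ⁻¹' {1}).indicator (fun _ => (1:ℝ)) ω := by
      funext ω
      by_cases hω : ω ∈ S ⁻¹' {1} <;> simp [Set.indicator_apply, hω]
    have hi1 : Integrable ((Z ⁻¹' s).indicator (fun _ => (1:ℝ))) P :=
      (integrable_const 1).indicator hZs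
    have hi2 : Integrable ((Z ⁻¹' s ∩ S ⁻¹' {1}).indicator (fun _ => (1:ℝ))) P :=
      (integrable_const 1).indicator (hZs.inter hB)
    have hi3 : Integrable ((S ⁻¹' {1}).indicator (fun _ => (1:ℝ))) P :=
      (integrable_const 1).indicator hB
    rw [hind1, hind2]
    have hc1 := condExp_sub (m := MeasurableSpace.comap F inferInstance) (μ := P) hi1 hi2
    have hc2 := condExp_sub (m := MeasurableSpace.comap F inferInstance) (μ := P)
      (integrable_const (1:ℝ)) hi3
    rw [condExp_const hmF] at hc2
    filter_upwards [hc1, hc2, hkey s hs] with ω h1 h2 h3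
    have e1 : (P[fun ω => (Z ⁻¹' s).indicator (fun _ => (1:ℝ)) ω -
        (Z ⁻¹' s ∩ S ⁻¹' {1}).indicator (fun _ => (1:ℝ)) ω |
          MeasurableSpace.comap F inferInstance]) ω =
        (P⟦Z ⁻¹' s | MeasurableSpace.comap F inferInstance⟧) ω -
          (P⟦Z ⁻¹' s ∩ S ⁻¹' {1} | MeasurableSpace.comap F inferInstance⟧) ω := h1
    have e2 : (P[fun ω => (fun _ => (1:ℝ)) ω - (S ⁻¹' {1}).indicator (fun _ => (1:ℝ)) ω |
          MeasurableSpace.comap F inferInstance]) ω =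
        1 - (P⟦S ⁻¹' {1} | MeasurableSpace.comap F inferInstance⟧) ω := h2
    rw [e1, e2, h3]
    ring
  · -- `S ⁻¹' t = ∅`
    have hteq : S ⁻¹' t = ∅ := by
      ext ω
      rcases hS01 ω with h | h <;> simp [h, h0t, h1t]
    rw [hteq, Set.inter_empty, Set.indicator_empty, condExp_const hmF]
    filter_upwards with ω
    simp
section Aux2

variable {Ω : Type*} {m m₂ : MeasurableSpace Ω} [mΩ : MeasurableSpace Ω] {P : Measure Ω}
  [IsFiniteMeasure P]

/-- If two conditional expectations agree (as set integrals) on a π-system generating `m₂ ≥ m`,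
then `P[g|m]` is a version of `P[g|m₂]`. -/
lemma aux_condExp_eq (hm : m ≤ mΩ) (hm₂ : m₂ ≤ mΩ) (hmm₂ : m ≤ m₂)
    {𝒞 : Set (Set Ω)} (hgen : m₂ = MeasurableSpace.generateFrom 𝒞) (hpi : IsPiSystem 𝒞)
    {g : Ω → ℝ} (hgint : Integrable g P)
    (hrect : ∀ A ∈ 𝒞, ∫ ω in A, (P[g|m]) ω ∂P = ∫ ω in A, g ω ∂P) :
    P[g|m] =ᵐ[P] P[g|m₂] := by
  have hind : ∀ ⦃A⦄, MeasurableSet[m₂] A →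
      ∫ ω in A, (P[g|m]) ω ∂P = ∫ ω in A, g ω ∂P := by
    refine MeasurableSpace.induction_on_inter (m := m₂) hgen hpi ?_ ?_ ?_ ?_
    · simp
    · exact fun t ht => hrect t ht
    · intro A hA hCA
      have hA' : MeasurableSet[mΩ] A := hm₂ A hA
      have t1 := integral_add_compl hA' (integrable_condExp (f := g) (m := m) (μ := P))
      have t2 := integral_add_compl hA' hgint
      have t3 : ∫ ω, (P[g|m]) ω ∂P = ∫ ω, g ω ∂P := integral_condExp hm
      linarith
    · intro f hdisj hfm hC
      rw [integral_iUnion (fun i => hm₂ _ (hfm i)) hdisj integrable_condExp.integrableOn,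
          integral_iUnion (fun i => hm₂ _ (hfm i)) hdisj hgint.integrableOn]
      exact tsum_congr hC
  exact ae_eq_condExp_of_forall_setIntegral_eq hm₂ hgint
    (fun A hA _ => integrable_condExp.integrableOn)
    (fun A hA _ => hind hA)
    (stronglyMeasurable_condExp.mono hmm₂).aestronglyMeasurable

/-- The main integral computation of the forward direction, in abstract form. -/
lemma aux_integral_mul_eq_zero (hm : m ≤ mΩ) (hm₂ : m₂ ≤ mΩ)
    {W g : Ω → ℝ} (hWsm : StronglyMeasurable[m₂] W) (hWint : Integrable W P)
    (hg : Integrable g P)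
    (hgW : Integrable (fun ω => W ω * g ω) P)
    (hcW : Integrable (fun ω => (P[g|m]) ω * W ω) P)
    (hcond : P[g|m₂] =ᵐ[P] P[g|m]) (hW0 : P[W|m] =ᵐ[P] 0) :
    ∫ ω, g ω * W ω ∂P = 0 := by
  have e1 : ∫ ω, g ω * W ω ∂P = ∫ ω in Set.univ, W ω * g ω ∂P := by
    rw [setIntegral_univ]
    exact integral_congr_ae (Filter.Eventually.of_forall fun ω => mul_comm _ _)
  have e2 : ∫ ω in Set.univ, W ω * g ω ∂P = ∫ ω in Set.univ, W ω * (P[g|m₂]) ω ∂P :=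
    aux_pullout hm₂ hWsm hgW hg MeasurableSet.univ
  have e3 : ∫ ω in Set.univ, W ω * (P[g|m₂]) ω ∂P = ∫ ω, (P[g|m]) ω * W ω ∂P := by
    rw [setIntegral_univ]
    refine integral_congr_ae ?_
    filter_upwards [hcond] with ω hω
    rw [hω, mul_comm]
  have e4 : ∫ ω, (P[g|m]) ω * W ω ∂P = ∫ ω in Set.univ, (P[g|m]) ω * (P[W|m]) ω ∂P := by
    rw [← setIntegral_univ]
    exact aux_pullout hm stronglyMeasurable_condExp hcW hWint MeasurableSet.univ
  have e5 : ∫ ω in Set.univ, (P[g|m]) ω * (P[W|m]) ω ∂P = 0 := by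
    rw [setIntegral_univ]
    have : (fun ω => (P[g|m]) ω * (P[W|m]) ω) =ᵐ[P] 0 := by
      filter_upwards [hW0] with ω hω
      simp [hω]
    rw [integral_congr_ae this]
    simp
  rw [e1, e2, e3, e4, e5]

end Aux2
/-- Forward direction: from the key product identity, the orthogonality property follows. -/
lemma aux_int_of_key {Ω XF XZ : Type*} {m : MeasurableSpace Ω} [mΩ : MeasurableSpace Ω]
    [MeasurableSpace XF] [MeasurableSpace XZ]
    (P : Measure Ω) [IsProbabilityMeasure P]
    {S : Ω → ℝ} (hS : Measurable S)
    {F : Ω → XF} (hF : Measurable F) {Z : Ω → XZ} (hZ : Measurable Z)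
    (hmF : MeasurableSpace.comap F inferInstance = m)
    (hkey : ∀ s : Set XZ, MeasurableSet s →
      (P⟦Z ⁻¹' s ∩ S ⁻¹' {1} | m⟧) =ᵐ[P]
        fun ω => (P⟦Z ⁻¹' s | m⟧) ω * (P⟦S ⁻¹' {1} | m⟧) ω)
    (h : XZ × XF → ℝ) (hh : Measurable h) (hh2 : MemLp (fun ω => h (Z ω, F ω)) 2 P)
    (hh0 : P[fun ω => h (Z ω, F ω) | m] =ᵐ[P] 0) :
    ∫ ω, (if S ω = 1 then (1 : ℝ) else 0) * h (Z ω, F ω) ∂P = 0 := by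
  have hm : m ≤ mΩ := hmF ▸ hF.comap_le
  have hB : MeasurableSet[mΩ] (S ⁻¹' {1}) := hS (measurableSet_singleton 1)
  have hBint : Integrable ((S ⁻¹' {1}).indicator (fun _ => (1:ℝ))) P :=
    (integrable_const 1).indicator hB
  have hBbd := aux_condExp_indicator_bound (P := P) hm hB
  have hWint : Integrable (fun ω => h (Z ω, F ω)) P := hh2.integrable one_le_two
  have hm₂ : MeasurableSpace.comap (fun ω => (Z ω, F ω)) inferInstance ≤ mΩ :=
    (hZ.prodMk hF).comap_le
  have hmm₂ : m ≤ MeasurableSpace.comap (fun ω => (Z ω, F ω)) inferInstance := by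
    rw [← hmF]
    calc MeasurableSpace.comap F inferInstance
        = ((inferInstance : MeasurableSpace XF).comap Prod.snd).comap
            (fun ω => (Z ω, F ω)) := by rw [MeasurableSpace.comap_comp]; rfl
      _ ≤ MeasurableSpace.comap (fun ω => (Z ω, F ω)) inferInstance :=
          MeasurableSpace.comap_mono measurable_snd.comap_le
  have hWsm : StronglyMeasurable[MeasurableSpace.comap (fun ω => (Z ω, F ω)) inferInstance]
      (fun ω => h (Z ω, F ω)) :=
    Measurable.stronglyMeasurable (hh.comp (measurable_iff_comap_le.mpr le_rfl))
  -- the π-system of rectangles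
  set 𝒞 : Set (Set Ω) :=
    Set.preimage (fun ω => (Z ω, F ω)) ''
      (Set.image2 (· ×ˢ ·) { s : Set XZ | MeasurableSet s } { t : Set XF | MeasurableSet t })
    with h𝒞
  have hgen : MeasurableSpace.comap (fun ω => (Z ω, F ω)) inferInstance
      = MeasurableSpace.generateFrom 𝒞 := by
    conv_lhs => rw [← generateFrom_prod]
    exact MeasurableSpace.comap_generateFrom
  have hpi : IsPiSystem 𝒞 := by
    have h1 := (isPiSystem_prod (α := XZ) (β := XF)).comap (fun ω => (Z ω, F ω))
    have h2 : 𝒞 = { s : Set Ω | ∃ t ∈ Set.image2 (· ×ˢ ·) { s : Set XZ | MeasurableSet s }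
        { t : Set XF | MeasurableSet t }, (fun ω => (Z ω, F ω)) ⁻¹' t = s } := by
      ext A
      simp [h𝒞, Set.mem_image]
    rw [h2]
    exact h1
  -- the rectangle computation
  have hrect : ∀ A ∈ 𝒞, ∫ ω in A, (P[(S ⁻¹' {1}).indicator (fun _ => (1:ℝ))|m]) ω ∂P
      = ∫ ω in A, (S ⁻¹' {1}).indicator (fun _ => (1:ℝ)) ω ∂P := by
    rintro A hA
    obtain ⟨t, ht, rfl⟩ := hA
    obtain ⟨s', hs', u', hu', rfl⟩ := ht
    have hs'' : MeasurableSet s' := hs'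
    have hu'' : MeasurableSet u' := hu'
    rw [Set.mk_preimage_prod]
    have hFu : MeasurableSet[m] (F ⁻¹' u') := hmF ▸ ⟨u', hu'', rfl⟩
    have hZint : Integrable ((Z ⁻¹' s').indicator (fun _ => (1:ℝ))) P :=
      (integrable_const 1).indicator (hZ hs'')
    have hprod : Integrable (fun ω => (P[(S ⁻¹' {1}).indicator (fun _ => (1:ℝ))|m]) ω *
        (Z ⁻¹' s').indicator (fun _ => (1:ℝ)) ω) P :=
      hZint.bdd_mul (stronglyMeasurable_condExp.mono hm).aestronglyMeasurable hBbd
    have hfe : (Z ⁻¹' s').indicator (P[(S ⁻¹' {1}).indicator (fun _ => (1:ℝ))|m])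
        = fun ω => (P[(S ⁻¹' {1}).indicator (fun _ => (1:ℝ))|m]) ω *
            (Z ⁻¹' s').indicator (fun _ => (1:ℝ)) ω := by
      funext ω
      by_cases hω : ω ∈ Z ⁻¹' s' <;> simp [Set.indicator_apply, hω]
    have l1 : ∫ ω in Z ⁻¹' s' ∩ F ⁻¹' u',
          (P[(S ⁻¹' {1}).indicator (fun _ => (1:ℝ))|m]) ω ∂P
        = ∫ ω in F ⁻¹' u', (P[(S ⁻¹' {1}).indicator (fun _ => (1:ℝ))|m]) ω *
            (Z ⁻¹' s').indicator (fun _ => (1:ℝ)) ω ∂P := by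
      rw [Set.inter_comm, ← setIntegral_indicator (hZ hs''), hfe]
    have l2 := aux_pullout (P := P) hm stronglyMeasurable_condExp hprod hZint hFu
    have r1 : ∫ ω in Z ⁻¹' s' ∩ F ⁻¹' u', (S ⁻¹' {1}).indicator (fun _ => (1:ℝ)) ω ∂P
        = ∫ ω in F ⁻¹' u', (Z ⁻¹' s' ∩ S ⁻¹' {1}).indicator (fun _ => (1:ℝ)) ω ∂P := by
      rw [Set.inter_comm, ← setIntegral_indicator (hZ hs'')]
      congr 1
      funext ω
      by_cases hω1 : ω ∈ Z ⁻¹' s' <;> by_cases hω2 : ω ∈ S ⁻¹' {1} <;>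
        simp [Set.indicator_apply, hω1, hω2]
    have r2 : ∫ ω in F ⁻¹' u', (Z ⁻¹' s' ∩ S ⁻¹' {1}).indicator (fun _ => (1:ℝ)) ω ∂P
        = ∫ ω in F ⁻¹' u',
            (P[(Z ⁻¹' s' ∩ S ⁻¹' {1}).indicator (fun _ => (1:ℝ))|m]) ω ∂P :=
      (setIntegral_condExp hm ((integrable_const 1).indicator ((hZ hs'').inter hB)) hFu).symm
    have r3 : ∫ ω in F ⁻¹' u',
          (P[(Z ⁻¹' s' ∩ S ⁻¹' {1}).indicator (fun _ => (1:ℝ))|m]) ω ∂P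
        = ∫ ω in F ⁻¹' u', (P[(Z ⁻¹' s').indicator (fun _ => (1:ℝ))|m]) ω *
            (P[(S ⁻¹' {1}).indicator (fun _ => (1:ℝ))|m]) ω ∂P := by
      refine setIntegral_congr_ae (hm _ hFu) ?_
      filter_upwards [hkey s' hs''] with ω hω _
      exact hω
    rw [l1, l2, r1, r2, r3]
    refine setIntegral_congr_ae (hm _ hFu) ?_
    filter_upwards with ω _
    exact mul_comm _ _
  have hcond : P[(S ⁻¹' {1}).indicator (fun _ => (1:ℝ)) |
      MeasurableSpace.comap (fun ω => (Z ω, F ω)) inferInstance] =ᵐ[P]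
      P[(S ⁻¹' {1}).indicator (fun _ => (1:ℝ)) | m] :=
    (aux_condExp_eq hm hm₂ hmm₂ hgen hpi hBint hrect).symm
  have hgW' : Integrable
      (fun ω => h (Z ω, F ω) * (S ⁻¹' {1}).indicator (fun _ => (1:ℝ)) ω) P := by
    have h1 : Integrable
        (fun ω => (S ⁻¹' {1}).indicator (fun _ => (1:ℝ)) ω * h (Z ω, F ω)) P :=
      hWint.bdd_mul (c := 1)
        ((stronglyMeasurable_const.indicator hB).aestronglyMeasurable)
        (Filter.Eventually.of_forall fun ω => by
          by_cases hω : ω ∈ S ⁻¹' {1} <;> simp [Set.indicator_apply, hω])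
    exact h1.congr (Filter.Eventually.of_forall fun ω => mul_comm _ _)
  have hcW : Integrable (fun ω => (P[(S ⁻¹' {1}).indicator (fun _ => (1:ℝ))|m]) ω *
      h (Z ω, F ω)) P :=
    hWint.bdd_mul (stronglyMeasurable_condExp.mono hm).aestronglyMeasurable hBbd
  have hmain := aux_integral_mul_eq_zero hm hm₂ hWsm hWint hBint hgW' hcW hcond hh0
  have hcongr : ∫ ω, (if S ω = 1 then (1 : ℝ) else 0) * h (Z ω, F ω) ∂P
      = ∫ ω, (S ⁻¹' {1}).indicator (fun _ => (1:ℝ)) ω * h (Z ω, F ω) ∂P := by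
    refine integral_congr_ae (Filter.Eventually.of_forall fun ω => ?_)
    by_cases hω : ω ∈ S ⁻¹' {1}
    · have hω' : S ω = 1 := hω
      simp [Set.indicator_apply, hω, hω']
    · have hω' : ¬ S ω = 1 := hω
      simp [Set.indicator_apply, hω, hω']
  rw [hcongr]
  exact hmain
/-- Backward direction: from the orthogonality property, the key product identity follows. -/
lemma aux_key_of_int {Ω XF XZ : Type*} {m : MeasurableSpace Ω} [mΩ : MeasurableSpace Ω]
    [MeasurableSpace XF]
    [MeasurableSpace XZ] [StandardBorelSpace XZ]
    (P : Measure Ω) [IsProbabilityMeasure P]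
    {S : Ω → ℝ} (hS : Measurable S)
    {F : Ω → XF} (hF : Measurable F) {Z : Ω → XZ} (hZ : Measurable Z)
    (hmF : MeasurableSpace.comap F inferInstance = m)
    (H : ∀ h : XZ × XF → ℝ, Measurable h → MemLp (fun ω => h (Z ω, F ω)) 2 P →
        (P[fun ω => h (Z ω, F ω) | m] =ᵐ[P] 0) →
        ∫ ω, (if S ω = 1 then (1 : ℝ) else 0) * h (Z ω, F ω) ∂P = 0)
    (s : Set XZ) (hs : MeasurableSet s) :
    (P⟦Z ⁻¹' s ∩ S ⁻¹' {1} | m⟧) =ᵐ[P]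
      fun ω => (P⟦Z ⁻¹' s | m⟧) ω * (P⟦S ⁻¹' {1} | m⟧) ω := by
  have hm : m ≤ mΩ := hmF ▸ hF.comap_le
  have hB : MeasurableSet[mΩ] (S ⁻¹' {1}) := hS (measurableSet_singleton 1)
  have hBint : Integrable ((S ⁻¹' {1}).indicator (fun _ => (1:ℝ))) P :=
    (integrable_const 1).indicator hB
  have hBbd := aux_condExp_indicator_bound (P := P) hm hB
  have hΩ : Nonempty Ω := by
    by_contra hc
    rw [not_nonempty_iff] at hc
    have h1 : P Set.univ = 1 := measure_univ
    rw [Set.univ_eq_empty_iff.mpr hc, measure_empty] at h1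
    exact zero_ne_one h1
  haveI := hΩ
  haveI : Nonempty XZ := Nonempty.map Z hΩ
  -- the factorized conditional probability of `Z ∈ s` given `F`
  set φ : XF → ℝ := fun x => (condDistrib Z F P x s).toReal with hφdef
  have hφm : Measurable φ := (Kernel.measurable_coe _ hs).ennreal_toReal
  have hφ0 : ∀ x, 0 ≤ φ x := fun x => ENNReal.toReal_nonneg
  have hφ1 : ∀ x, φ x ≤ 1 := by
    intro x
    have h1 : condDistrib Z F P x s ≤ 1 := prob_le_one
    calc (condDistrib Z F P x s).toReal ≤ (1 : ℝ≥0∞).toReal :=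
          ENNReal.toReal_mono ENNReal.one_ne_top h1
      _ = 1 := ENNReal.toReal_one
  have hφF : (fun ω => φ (F ω)) =ᵐ[P] P[(Z ⁻¹' s).indicator (fun _ => (1:ℝ)) | m] := by
    have h1 := condDistrib_ae_eq_condExp (μ := P) hF hZ hs
    rw [hmF] at h1
    exact h1
  have hmFmeas : ∀ {u : Set XF}, MeasurableSet u → MeasurableSet[m] (F ⁻¹' u) :=
    fun {u} hu => hmF ▸ ⟨u, hu, rfl⟩
  have hφFm : Measurable[m] (fun ω => φ (F ω)) := by
    rw [← hmF]
    exact hφm.comp (comap_measurable F)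
  have hφFaesm : AEStronglyMeasurable (fun ω => φ (F ω)) P :=
    ((hφm.comp hF).stronglyMeasurable).aestronglyMeasurable
  have hφFbd : ∀ᵐ ω ∂P, ‖φ (F ω)‖ ≤ 1 :=
    Filter.Eventually.of_forall fun ω => by
      rw [Real.norm_eq_abs, abs_le]
      exact ⟨by linarith [hφ0 (F ω)], hφ1 (F ω)⟩
  have hφFint : Integrable (fun ω => φ (F ω)) P :=
    (memLp_top_of_bound hφFaesm 1 hφFbd).integrable le_top
  have hZsint : Integrable ((Z ⁻¹' s).indicator (fun _ => (1:ℝ))) P :=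
    (integrable_const 1).indicator (hZ hs)
  -- the centered function has zero conditional expectation
  have hD0 : P[fun ω => (Z ⁻¹' s).indicator (fun _ => (1:ℝ)) ω - φ (F ω) | m] =ᵐ[P] 0 := by
    have h1 := condExp_sub (m := m) (μ := P) hZsint hφFint
    have h2 : P[(fun ω => φ (F ω)) | m] = fun ω => φ (F ω) :=
      condExp_of_stronglyMeasurable hm hφFm.stronglyMeasurable hφFint
    filter_upwards [h1, hφF] with ω hω1 hω2
    rw [Pi.zero_apply]
    calc (P[fun ω => (Z ⁻¹' s).indicator (fun _ => (1:ℝ)) ω - φ (F ω) | m]) ω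
        = (P[(Z ⁻¹' s).indicator (fun _ => (1:ℝ)) | m]) ω - (P[(fun ω => φ (F ω)) | m]) ω := hω1
      _ = (P[(Z ⁻¹' s).indicator (fun _ => (1:ℝ)) | m]) ω - φ (F ω) := by rw [h2]
      _ = 0 := by rw [← hω2]; ring
  -- the main integral identity, for every `u`
  have EQ : ∀ u : Set XF, MeasurableSet u →
      ∫ ω in F ⁻¹' u, (S ⁻¹' {1}).indicator (fun _ => (1:ℝ)) ω *
          (Z ⁻¹' s).indicator (fun _ => (1:ℝ)) ω ∂P
        = ∫ ω in F ⁻¹' u, (S ⁻¹' {1}).indicator (fun _ => (1:ℝ)) ω * φ (F ω) ∂P := by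
    intro u hu
    set hfun : XZ × XF → ℝ := fun q =>
      (s.indicator (fun _ => (1:ℝ)) q.1 - φ q.2) * u.indicator (fun _ => (1:ℝ)) q.2 with hhfun
    have hfunm : Measurable hfun := by
      refine Measurable.mul ?_ ?_
      · exact ((measurable_const.indicator hs).comp measurable_fst).sub
          (hφm.comp measurable_snd)
      · exact (measurable_const.indicator hu).comp measurable_snd
    have hfunbd : ∀ ω : Ω, ‖hfun (Z ω, F ω)‖ ≤ 1 := by
      intro ω
      rw [Real.norm_eq_abs, hhfun]
      have h0 := hφ0 (F ω)
      have h1 := hφ1 (F ω)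
      have ha : |s.indicator (fun _ => (1:ℝ)) (Z ω) - φ (F ω)| ≤ 1 := by
        rw [abs_le]
        by_cases hω : Z ω ∈ s <;> simp [Set.indicator_apply, hω] <;> constructor <;> linarith
      have hb : |u.indicator (fun _ => (1:ℝ)) (F ω)| ≤ 1 := by
        by_cases hω : F ω ∈ u <;> simp [Set.indicator_apply, hω]
      calc |(s.indicator (fun _ => (1:ℝ)) (Z ω) - φ (F ω)) *
            u.indicator (fun _ => (1:ℝ)) (F ω)|
          = |s.indicator (fun _ => (1:ℝ)) (Z ω) - φ (F ω)| *
            |u.indicator (fun _ => (1:ℝ)) (F ω)| := abs_mul _ _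
        _ ≤ 1 := mul_le_one₀ ha (abs_nonneg _) hb
    have hfun2 : MemLp (fun ω => hfun (Z ω, F ω)) 2 P :=
      (memLp_top_of_bound
        ((hfunm.comp (hZ.prodMk hF)).stronglyMeasurable.aestronglyMeasurable) 1
        (Filter.Eventually.of_forall hfunbd)).mono_exponent le_top
    have hDint : Integrable (fun ω => (Z ⁻¹' s).indicator (fun _ => (1:ℝ)) ω - φ (F ω)) P :=
      hZsint.sub hφFint
    have hfun0 : P[fun ω => hfun (Z ω, F ω) | m] =ᵐ[P] 0 := by
      have e : (fun ω => hfun (Z ω, F ω))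
          = ((F ⁻¹' u).indicator (fun _ => (1:ℝ))) *
            (fun ω => (Z ⁻¹' s).indicator (fun _ => (1:ℝ)) ω - φ (F ω)) := by
        funext ω
        show hfun (Z ω, F ω) = _ * _
        by_cases h1 : Z ω ∈ s <;> by_cases h2 : F ω ∈ u <;>
          simp [hhfun, Set.indicator_apply, h1, h2]
      rw [e]
      have hksm : StronglyMeasurable[m] ((F ⁻¹' u).indicator (fun _ => (1:ℝ))) :=
        stronglyMeasurable_const.indicator (hmFmeas hu)
      have hkD : Integrable (fun ω => (F ⁻¹' u).indicator (fun _ => (1:ℝ)) ω *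
          ((Z ⁻¹' s).indicator (fun _ => (1:ℝ)) ω - φ (F ω))) P :=
        hDint.bdd_mul (c := 1) ((hksm.mono hm).aestronglyMeasurable)
          (Filter.Eventually.of_forall fun ω => by
            by_cases hω : ω ∈ F ⁻¹' u <;> simp [Set.indicator_apply, hω])
      refine (condExp_mul_of_stronglyMeasurable_left hksm hkD hDint).trans ?_
      filter_upwards [hD0] with ω hω
      simp only [Pi.mul_apply, Pi.zero_apply] at hω ⊢
      rw [hω, mul_zero]
    have hH := H hfun hfunm hfun2 hfun0
    have e2 : ∫ ω, (if S ω = 1 then (1:ℝ) else 0) * hfun (Z ω, F ω) ∂P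
        = ∫ ω, (F ⁻¹' u).indicator
            (fun ω' => (S ⁻¹' {1}).indicator (fun _ => (1:ℝ)) ω' *
              ((Z ⁻¹' s).indicator (fun _ => (1:ℝ)) ω' - φ (F ω'))) ω ∂P := by
      refine integral_congr_ae (Filter.Eventually.of_forall fun ω => ?_)
      by_cases h1 : Z ω ∈ s <;> by_cases h2 : F ω ∈ u <;> by_cases h3 : S ω = 1 <;>
        simp [hhfun, Set.indicator_apply, Set.mem_preimage, Set.mem_singleton_iff,
          h1, h2, h3]
    rw [e2] at hH
    rw [integral_indicator (hF hu)] at hH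
    have i1 : Integrable (fun ω => (S ⁻¹' {1}).indicator (fun _ => (1:ℝ)) ω *
        (Z ⁻¹' s).indicator (fun _ => (1:ℝ)) ω) P :=
      hZsint.bdd_mul (c := 1)
        ((stronglyMeasurable_const.indicator hB).aestronglyMeasurable)
        (Filter.Eventually.of_forall fun ω => by
          by_cases hω : ω ∈ S ⁻¹' {1} <;> simp [Set.indicator_apply, hω])
    have i2 : Integrable (fun ω => (S ⁻¹' {1}).indicator (fun _ => (1:ℝ)) ω * φ (F ω)) P :=
      hφFint.bdd_mul (c := 1)
        ((stronglyMeasurable_const.indicator hB).aestronglyMeasurable)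
        (Filter.Eventually.of_forall fun ω => by
          by_cases hω : ω ∈ S ⁻¹' {1} <;> simp [Set.indicator_apply, hω])
    have hH' : ∫ ω in F ⁻¹' u, ((S ⁻¹' {1}).indicator (fun _ => (1:ℝ)) ω *
          (Z ⁻¹' s).indicator (fun _ => (1:ℝ)) ω -
          (S ⁻¹' {1}).indicator (fun _ => (1:ℝ)) ω * φ (F ω)) ∂P = 0 := by
      refine Eq.trans ?_ hH
      refine setIntegral_congr_ae (hF hu) (Filter.Eventually.of_forall fun ω _ => ?_)
      ring
    rw [integral_sub i1.integrableOn i2.integrableOn] at hH'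
    exact sub_eq_zero.mp hH'
  -- conclude by uniqueness of the conditional expectation
  have hfinal : (fun ω => φ (F ω) * (P[(S ⁻¹' {1}).indicator (fun _ => (1:ℝ))|m]) ω) =ᵐ[P]
      P[(Z ⁻¹' s ∩ S ⁻¹' {1}).indicator (fun _ => (1:ℝ))|m] := by
    refine ae_eq_condExp_of_forall_setIntegral_eq hm
      ((integrable_const 1).indicator ((hZ hs).inter hB)) ?_ ?_ ?_
    · intro A hA _
      exact (integrable_condExp.bdd_mul hφFaesm hφFbd).integrableOn
    · intro A hA _
      rw [← hmF] at hA
      obtain ⟨u, hu, rfl⟩ := hA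
      have hprod : Integrable (fun ω => φ (F ω) *
          (S ⁻¹' {1}).indicator (fun _ => (1:ℝ)) ω) P :=
        hBint.bdd_mul hφFaesm hφFbd
      have p1 := aux_pullout (P := P) hm hφFm.stronglyMeasurable hprod hBint (hmFmeas hu)
      rw [← p1]
      calc ∫ ω in F ⁻¹' u, φ (F ω) * (S ⁻¹' {1}).indicator (fun _ => (1:ℝ)) ω ∂P
          = ∫ ω in F ⁻¹' u, (S ⁻¹' {1}).indicator (fun _ => (1:ℝ)) ω * φ (F ω) ∂P :=
            setIntegral_congr_ae (hF hu)
              (Filter.Eventually.of_forall fun ω _ => mul_comm _ _)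
        _ = ∫ ω in F ⁻¹' u, (S ⁻¹' {1}).indicator (fun _ => (1:ℝ)) ω *
              (Z ⁻¹' s).indicator (fun _ => (1:ℝ)) ω ∂P := (EQ u hu).symm
        _ = ∫ ω in F ⁻¹' u, (Z ⁻¹' s ∩ S ⁻¹' {1}).indicator (fun _ => (1:ℝ)) ω ∂P := by
            refine setIntegral_congr_ae (hF hu)
              (Filter.Eventually.of_forall fun ω _ => ?_)
            by_cases h1 : ω ∈ Z ⁻¹' s <;> by_cases h2 : ω ∈ S ⁻¹' {1} <;>
              simp [Set.indicator_apply, h1, h2]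
    · exact (hφFm.stronglyMeasurable.mul stronglyMeasurable_condExp).aestronglyMeasurable
  filter_upwards [hfinal, hφF] with ω h1 h2
  rw [← h1, ← h2]

/-- **Characterization of conditional independence for a binary sensitive attribute.**
If `S` takes values in `{0,1}`, then `Z` and `S` are conditionally independent given `F` if and
only if, for every measurable `h̃ : 𝒳_Z × 𝒳_F → ℝ` with `E[h̃(Z,F)²] < ∞` and
`E[h̃(Z,F) | σ(F)] = 0` a.s., one has `E[𝟙{S=1} ⬝ h̃(Z,F)] = 0`. -/
theorem binary_characterization_of_conditional_independence
    {Ω : Type*} [MeasurableSpace Ω] [StandardBorelSpace Ω]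
    {XF XZ : Type*} [MeasurableSpace XF] [StandardBorelSpace XF]
    [MeasurableSpace XZ] [StandardBorelSpace XZ]
    (P : Measure Ω) [IsProbabilityMeasure P]
    (S : Ω → ℝ) (hS : Measurable S) (hS01 : ∀ ω, S ω = 0 ∨ S ω = 1)
    (F : Ω → XF) (hF : Measurable F)
    (Z : Ω → XZ) (hZ : Measurable Z) :
    CondIndepFun (MeasurableSpace.comap F inferInstance) hF.comap_le Z S P ↔
      ∀ h : XZ × XF → ℝ, Measurable h → MemLp (fun ω => h (Z ω, F ω)) 2 P →
        (P[fun ω => h (Z ω, F ω) | MeasurableSpace.comap F inferInstance] =ᵐ[P] 0) →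
        ∫ ω, (if S ω = 1 then (1 : ℝ) else 0) * h (Z ω, F ω) ∂P = 0 := by
  constructor
  · intro hCI h hh hh2 hh0
    refine aux_int_of_key P hS hF hZ rfl ?_ h hh hh2 hh0
    intro s hs
    exact (condIndepFun_iff_condExp_inter_preimage_eq_mul hZ hS).mp hCI s {1} hs
      (measurableSet_singleton 1)
  · intro H
    refine aux_CI_of_key P hS hS01 hF hZ ?_
    intro s hs
    exact aux_key_of_int P hS hF hZ rfl H s hs
end

section
/- (Theorem: characterization with binary variable.) Suppose S takes values in {0,1}. The random variables Z and S are conditionally independent given F if and only if, for every measurable function h : 𝒳_Z × 𝒳_F → ℝ with E[h(Z,F)²] < ∞, one has Q(h) = 0, where Q(h) := E[𝟙{S=1} · P(S=0|F) · h(Z,F)] − E[𝟙{S=0} · P(S=1|F) · h(Z,F)]. -/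
open MeasureTheory ProbabilityTheory

section Aux

variable {Ω : Type*} [mΩ : MeasurableSpace Ω]
  {XF XZ : Type*} [MeasurableSpace XF] [StandardBorelSpace XF]
  [MeasurableSpace XZ] [StandardBorelSpace XZ]

lemma aux_integrable_bdd_mul {P : Measure Ω} [IsFiniteMeasure P] {f g : Ω → ℝ}
    (hg : Integrable g P) (hf : AEStronglyMeasurable f P) (C : ℝ)
    (hC : ∀ᵐ ω ∂P, |f ω| ≤ C) : Integrable (fun ω => f ω * g ω) P := by
  refine Integrable.mono' (hg.norm.const_mul C) (hf.mul hg.aestronglyMeasurable) ?_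
  filter_upwards [hC] with ω hω
  rw [norm_mul]
  exact mul_le_mul_of_nonneg_right (by rwa [Real.norm_eq_abs]) (norm_nonneg _)

lemma aux_indicator_bdd (A : Set Ω) (ω : Ω) : |A.indicator (fun _ => (1:ℝ)) ω| ≤ 1 := by
  by_cases hω : ω ∈ A
  · rw [Set.indicator_of_mem hω]; norm_num
  · rw [Set.indicator_of_notMem hω]; norm_num

lemma aux_indicator_int {P : Measure Ω} [IsFiniteMeasure P] {A : Set Ω}
    (hA : MeasurableSet A) : Integrable (A.indicator fun _ => (1:ℝ)) P := by
  refine (MemLp.of_bound (measurable_const.indicator hA).aestronglyMeasurable 1 ?_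
    ).integrable le_rfl
  exact Filter.Eventually.of_forall fun ω => by
    rw [Real.norm_eq_abs]; exact aux_indicator_bdd A ω

variable [StandardBorelSpace Ω]

theorem aux_core (P : Measure Ω) [IsProbabilityMeasure P]
    (S : Ω → ℝ) (hS : Measurable S) (hS01 : ∀ ω, S ω = 0 ∨ S ω = 1)
    (F : Ω → XF) (hF : Measurable F)
    (Z : Ω → XZ) (hZ : Measurable Z) :
    CondIndepFun (MeasurableSpace.comap F inferInstance) hF.comap_le Z S P ↔
      ∀ h : XZ × XF → ℝ, Measurable h → MemLp (fun ω => h (Z ω, F ω)) 2 P →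
        ∫ ω, ((S ⁻¹' {1}).indicator (fun _ => (1:ℝ)) ω
            - (P[(S ⁻¹' {1}).indicator (fun _ => (1:ℝ)) | (MeasurableSpace.comap F inferInstance)]) ω) * h (Z ω, F ω) ∂P = 0 := by
  classical
  have hm : (MeasurableSpace.comap F inferInstance) ≤ mΩ := hF.comap_le
  set I : Ω → ℝ := (S ⁻¹' {1}).indicator (fun _ => (1:ℝ)) with hIdef
  set p' : Ω → ℝ := P[I | (MeasurableSpace.comap F inferInstance)] with hpdef
  have hI_meas : Measurable I := measurable_const.indicator (hS (measurableSet_singleton 1))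
  have hI_bdd : ∀ ω, |I ω| ≤ 1 := by
    intro ω; rw [hIdef]; exact aux_indicator_bdd _ ω
  have hI_int : Integrable I P := by
    rw [hIdef]; exact aux_indicator_int (hS (measurableSet_singleton 1))
  have hp'_int : Integrable p' P := integrable_condExp
  have hp'_sm : StronglyMeasurable[(MeasurableSpace.comap F inferInstance)] p' := stronglyMeasurable_condExp
  have hp'_bdd : ∀ᵐ ω ∂P, |p' ω| ≤ 1 := by
    have := ae_bdd_condExp_of_ae_bdd (m := (MeasurableSpace.comap F inferInstance)) (μ := P) (R := 1) (f := I)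
      (Filter.Eventually.of_forall fun ω => by simpa using hI_bdd ω)
    simpa using this
  have hd_int : Integrable (fun ω => I ω - p' ω) P := hI_int.sub hp'_int
  have hd_aesm : AEStronglyMeasurable (fun ω => I ω - p' ω) P :=
    (hI_meas.sub (hp'_sm.mono hm).measurable).aestronglyMeasurable
  have hd_bdd : ∀ᵐ ω ∂P, |I ω - p' ω| ≤ 2 := by
    filter_upwards [hp'_bdd] with ω hω
    calc |I ω - p' ω| ≤ |I ω| + |p' ω| := abs_sub _ _
    _ ≤ 2 := by linarith [hI_bdd ω]
  constructor
  · -- forward direction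
    intro hCI h hh hL2
    have hcomp_int : Integrable (fun ω => h (Z ω, F ω)) P :=
      (hL2.mono_exponent (by norm_num)).integrable le_rfl
    have hmp : (MeasurableSpace.comap (fun ω => (Z ω, F ω)) inferInstance) ≤ mΩ := (hZ.prodMk hF).comap_le
    have hm_le_mp : (MeasurableSpace.comap F inferInstance) ≤ (MeasurableSpace.comap (fun ω => (Z ω, F ω)) inferInstance) := by
      rintro A ⟨u, hu, rfl⟩
      exact ⟨Set.univ ×ˢ u, MeasurableSet.prod MeasurableSet.univ hu, by ext ω; simp⟩
    -- Step A : rectangles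
    have keyA : ∀ s u, MeasurableSet s → MeasurableSet u →
        ∫ ω in Z ⁻¹' s ∩ F ⁻¹' u, I ω ∂P = ∫ ω in Z ⁻¹' s ∩ F ⁻¹' u, p' ω ∂P := by
      intro s u hs hu
      have hmul := (condIndepFun_iff_condExp_inter_preimage_eq_mul
        (m' := (MeasurableSpace.comap F inferInstance)) hZ hS).mp hCI s {1} hs (measurableSet_singleton 1)
      have hu' : MeasurableSet[(MeasurableSpace.comap F inferInstance)] (F ⁻¹' u) := ⟨u, hu, rfl⟩
      have hA : MeasurableSet (Z ⁻¹' s) := hZ hs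
      have hAB_int : Integrable ((Z ⁻¹' s ∩ S ⁻¹' {1}).indicator fun _ => (1:ℝ)) P :=
        aux_indicator_int (hA.inter (hS (measurableSet_singleton 1)))
      have hgA_int : Integrable ((Z ⁻¹' s).indicator fun _ => (1:ℝ)) P := aux_indicator_int hA
      have hp'gA_int : Integrable (p' * (Z ⁻¹' s).indicator fun _ => (1:ℝ)) P := by
        have := aux_integrable_bdd_mul hgA_int (hp'_sm.mono hm).aestronglyMeasurable 1 hp'_bdd
        exact this
      have hpull := condExp_mul_of_stronglyMeasurable_left (m := (MeasurableSpace.comap F inferInstance)) (μ := P) hp'_sm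
        hp'gA_int hgA_int
      calc ∫ ω in Z ⁻¹' s ∩ F ⁻¹' u, I ω ∂P
          = ∫ ω in F ⁻¹' u, ((Z ⁻¹' s ∩ S ⁻¹' {1}).indicator fun _ => (1:ℝ)) ω ∂P := by
            rw [Set.inter_comm, ← setIntegral_indicator hA]
            congr 1
            funext ω
            rw [hIdef, Set.indicator_indicator]
        _ = ∫ ω in F ⁻¹' u, (P⟦Z ⁻¹' s ∩ S ⁻¹' {1} | (MeasurableSpace.comap F inferInstance)⟧) ω ∂P :=
            (setIntegral_condExp hm hAB_int hu').symm
        _ = ∫ ω in F ⁻¹' u, (P⟦Z ⁻¹' s | (MeasurableSpace.comap F inferInstance)⟧) ω * p' ω ∂P :=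
            integral_congr_ae (Filter.EventuallyEq.restrict hmul)
        _ = ∫ ω in F ⁻¹' u, (p' * P[(Z ⁻¹' s).indicator fun _ => (1:ℝ) | (MeasurableSpace.comap F inferInstance)]) ω ∂P :=
            integral_congr_ae (Filter.EventuallyEq.restrict
              (Filter.Eventually.of_forall fun ω => by
                simp only [Pi.mul_apply]; exact mul_comm _ _))
        _ = ∫ ω in F ⁻¹' u, (P[p' * (Z ⁻¹' s).indicator fun _ => (1:ℝ) | (MeasurableSpace.comap F inferInstance)]) ω ∂P :=
            integral_congr_ae (Filter.EventuallyEq.restrict hpull.symm)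
        _ = ∫ ω in F ⁻¹' u, (p' * (Z ⁻¹' s).indicator fun _ => (1:ℝ)) ω ∂P :=
            setIntegral_condExp hm hp'gA_int hu'
        _ = ∫ ω in F ⁻¹' u, (Z ⁻¹' s).indicator p' ω ∂P := by
            refine integral_congr_ae (Filter.EventuallyEq.restrict
              (Filter.Eventually.of_forall fun ω => ?_))
            by_cases hω : ω ∈ Z ⁻¹' s
            · rw [Pi.mul_apply, Set.indicator_of_mem hω, Set.indicator_of_mem hω, mul_one]
            · rw [Pi.mul_apply, Set.indicator_of_notMem hω, Set.indicator_of_notMem hω,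
                mul_zero]
        _ = ∫ ω in Z ⁻¹' s ∩ F ⁻¹' u, p' ω ∂P := by
            rw [setIntegral_indicator hA, Set.inter_comm]
    -- Step B : all sets in the product σ-algebra
    have keyB : ∀ t : Set (XZ × XF), MeasurableSet t →
        ∫ ω in (fun ω => (Z ω, F ω)) ⁻¹' t, I ω ∂P
          = ∫ ω in (fun ω => (Z ω, F ω)) ⁻¹' t, p' ω ∂P := by
      have huniv : ∫ ω, I ω ∂P = ∫ ω, p' ω ∂P := (integral_condExp hm).symm
      refine fun t ht => MeasurableSpace.induction_on_inter
        (C := fun t _ => ∫ ω in (fun ω => (Z ω, F ω)) ⁻¹' t, I ω ∂P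
          = ∫ ω in (fun ω => (Z ω, F ω)) ⁻¹' t, p' ω ∂P)
        generateFrom_prod.symm isPiSystem_prod ?_ ?_ ?_ ?_ t ht
      · simp
      · rintro _ ⟨s, hs, u, hu, rfl⟩
        rw [Set.mk_preimage_prod]
        exact keyA s u hs hu
      · intro t ht hC
        have hB : MeasurableSet ((fun ω => (Z ω, F ω)) ⁻¹' t) := (hZ.prodMk hF) ht
        have h1 := integral_add_compl hB hI_int
        have h2 := integral_add_compl hB hp'_int
        rw [Set.preimage_compl]
        linarith
      · intro f hdisj hmeas hC
        rw [Set.preimage_iUnion,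
          integral_iUnion (fun i => (hZ.prodMk hF) (hmeas i))
            (fun i j hij => (hdisj hij).preimage _) hI_int.integrableOn,
          integral_iUnion (fun i => (hZ.prodMk hF) (hmeas i))
            (fun i j hij => (hdisj hij).preimage _) hp'_int.integrableOn]
        exact tsum_congr fun i => hC i
    -- Step C : conditional expectation of I given (Z, F)
    have hIp : P[I | (MeasurableSpace.comap (fun ω => (Z ω, F ω)) inferInstance)] =ᵐ[P] p' := by
      refine (ae_eq_condExp_of_forall_setIntegral_eq hmp hI_int
        (fun s _ _ => hp'_int.integrableOn) ?_ ?_).symm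
      · rintro _ ⟨t, ht, rfl⟩ _
        exact (keyB t ht).symm
      · exact (hp'_sm.mono hm_le_mp).aestronglyMeasurable
    -- Step D : conclusion
    have hpair_meas : Measurable[(MeasurableSpace.comap (fun ω => (Z ω, F ω)) inferInstance)] (fun ω => (Z ω, F ω)) :=
      measurable_iff_comap_le.mpr le_rfl
    have h_sm : StronglyMeasurable[(MeasurableSpace.comap (fun ω => (Z ω, F ω)) inferInstance)] (fun ω => h (Z ω, F ω)) :=
      (hh.comp hpair_meas).stronglyMeasurable
    have hprod_int : Integrable ((fun ω => h (Z ω, F ω)) * fun ω => I ω - p' ω) P := by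
      have h0 := aux_integrable_bdd_mul hcomp_int hd_aesm 2 hd_bdd
      have he : ((fun ω => h (Z ω, F ω)) * fun ω => I ω - p' ω)
          = fun ω => (I ω - p' ω) * h (Z ω, F ω) := by
        funext ω; rw [Pi.mul_apply]; exact mul_comm _ _
      rw [he]
      exact h0
    have hd0 : P[fun ω => I ω - p' ω | (MeasurableSpace.comap (fun ω => (Z ω, F ω)) inferInstance)] =ᵐ[P] (0 : Ω → ℝ) := by
      have h1 : P[fun ω => I ω - p' ω | (MeasurableSpace.comap (fun ω => (Z ω, F ω)) inferInstance)] =ᵐ[P] P[I | (MeasurableSpace.comap (fun ω => (Z ω, F ω)) inferInstance)] - P[p' | (MeasurableSpace.comap (fun ω => (Z ω, F ω)) inferInstance)] :=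
        condExp_sub hI_int hp'_int _
      have h2 : P[p' | (MeasurableSpace.comap (fun ω => (Z ω, F ω)) inferInstance)] = p' :=
        condExp_of_stronglyMeasurable hmp (hp'_sm.mono hm_le_mp) hp'_int
      filter_upwards [h1, hIp] with ω e1 e2
      simp only [Pi.zero_apply]
      rw [e1, Pi.sub_apply, h2, e2, sub_self]
    have hpull2 := condExp_mul_of_stronglyMeasurable_left (m := (MeasurableSpace.comap (fun ω => (Z ω, F ω)) inferInstance)) (μ := P) h_sm
      hprod_int hd_int
    have hzero : P[(fun ω => h (Z ω, F ω)) * fun ω => I ω - p' ω | (MeasurableSpace.comap (fun ω => (Z ω, F ω)) inferInstance)] =ᵐ[P] (0 : Ω → ℝ) := by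
      filter_upwards [hpull2, hd0] with ω e1 e2
      rw [e1, Pi.mul_apply, e2, Pi.zero_apply, mul_zero]
    calc ∫ ω, (I ω - p' ω) * h (Z ω, F ω) ∂P
        = ∫ ω, ((fun ω => h (Z ω, F ω)) * fun ω => I ω - p' ω) ω ∂P := by
          refine integral_congr_ae (Filter.Eventually.of_forall fun ω => ?_)
          rw [Pi.mul_apply]; exact mul_comm _ _
      _ = ∫ ω, (P[(fun ω => h (Z ω, F ω)) * fun ω => I ω - p' ω | (MeasurableSpace.comap (fun ω => (Z ω, F ω)) inferInstance)]) ω ∂P :=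
          (integral_condExp hmp).symm
      _ = 0 := by
          rw [integral_congr_ae hzero]
          simp
  · -- converse direction
    intro H
    rw [condIndepFun_iff_condExp_inter_preimage_eq_mul
      (m' := (MeasurableSpace.comap F inferInstance)) (hm' := hF.comap_le) hZ hS]
    intro s t hs ht
    have hA : MeasurableSet (Z ⁻¹' s) := hZ hs
    set gA : Ω → ℝ := (Z ⁻¹' s).indicator (fun ω => (1:ℝ)) with hgAdef
    have hgA_meas : Measurable gA := measurable_const.indicator hA
    have hgA_bdd : ∀ ω, |gA ω| ≤ 1 := by
      intro ω; rw [hgAdef]; exact aux_indicator_bdd _ ω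
    have hgA_int : Integrable gA P := by rw [hgAdef]; exact aux_indicator_int hA
    have hgAI_int : Integrable (fun ω => gA ω * I ω) P :=
      aux_integrable_bdd_mul hI_int hgA_meas.aestronglyMeasurable 1
        (Filter.Eventually.of_forall hgA_bdd)
    have hgAp_int : Integrable (fun ω => gA ω * p' ω) P :=
      aux_integrable_bdd_mul hp'_int hgA_meas.aestronglyMeasurable 1
        (Filter.Eventually.of_forall hgA_bdd)
    -- key step: E[gA * (I - p') | m] = 0
    have keyC : P[fun ω => gA ω * (I ω - p' ω) | (MeasurableSpace.comap F inferInstance)] =ᵐ[P] (0 : Ω → ℝ) := by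
      have hint : Integrable (fun ω => gA ω * (I ω - p' ω)) P :=
        aux_integrable_bdd_mul hd_int hgA_meas.aestronglyMeasurable 1
          (Filter.Eventually.of_forall hgA_bdd)
      refine (ae_eq_condExp_of_forall_setIntegral_eq hm hint
        (fun u _ _ => (integrable_zero _ _ _).integrableOn) ?_
        (stronglyMeasurable_const.aestronglyMeasurable)).symm
      rintro _ ⟨v, hv, rfl⟩ _
      have hhm : Measurable ((s ×ˢ v).indicator (fun _ => (1:ℝ))) :=
        measurable_const.indicator (hs.prod hv)
      have hL2 : MemLp (fun ω => (s ×ˢ v).indicator (fun _ => (1:ℝ)) (Z ω, F ω)) 2 P := by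
        refine MemLp.of_bound (hhm.comp (hZ.prodMk hF)).aestronglyMeasurable 1 ?_
        exact Filter.Eventually.of_forall fun ω => by
          rw [Real.norm_eq_abs]; exact aux_indicator_bdd _ _
      have h0 := H _ hhm hL2
      have heq : ∫ ω in F ⁻¹' v, gA ω * (I ω - p' ω) ∂P
          = ∫ ω, (I ω - p' ω) * (s ×ˢ v).indicator (fun _ => (1:ℝ)) (Z ω, F ω) ∂P := by
        rw [← integral_indicator (hF hv)]
        refine integral_congr_ae (Filter.Eventually.of_forall fun ω => ?_)
        rw [hgAdef]
        classical
        by_cases h1 : Z ω ∈ s <;> by_cases h2 : F ω ∈ v <;>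
          simp [Set.indicator_apply, h1, h2, mul_comm]
      simp only [Pi.zero_apply, integral_zero]
      rw [heq, h0]
    -- hence E[gA * I | m] = E[gA * p' | m]
    have hkk : P[fun ω => gA ω * I ω | (MeasurableSpace.comap F inferInstance)] =ᵐ[P] P[fun ω => gA ω * p' ω | (MeasurableSpace.comap F inferInstance)] := by
      have h1 : P[(fun ω => gA ω * I ω) - fun ω => gA ω * p' ω | (MeasurableSpace.comap F inferInstance)]
          =ᵐ[P] P[fun ω => gA ω * I ω | (MeasurableSpace.comap F inferInstance)] - P[fun ω => gA ω * p' ω | (MeasurableSpace.comap F inferInstance)] :=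
        condExp_sub hgAI_int hgAp_int _
      have h2 : P[(fun ω => gA ω * I ω) - fun ω => gA ω * p' ω | (MeasurableSpace.comap F inferInstance)] =ᵐ[P] (0 : Ω → ℝ) := by
        have he : ((fun ω => gA ω * I ω) - fun ω => gA ω * p' ω)
            = fun ω => gA ω * (I ω - p' ω) := by
          funext ω; rw [Pi.sub_apply, mul_sub]
        rw [he]
        exact keyC
      filter_upwards [h1, h2] with ω e1 e2
      have h3 := e1.symm.trans e2
      rw [Pi.sub_apply, Pi.zero_apply, sub_eq_zero] at h3
      exact h3
    -- pull out p'
    have hpull3 : P[fun ω => gA ω * p' ω | (MeasurableSpace.comap F inferInstance)]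
        =ᵐ[P] fun ω => p' ω * (P[gA | (MeasurableSpace.comap F inferInstance)]) ω := by
      have hint : Integrable (p' * gA) P := by
        have := aux_integrable_bdd_mul hgA_int (hp'_sm.mono hm).aestronglyMeasurable 1 hp'_bdd
        exact this
      have hb := condExp_mul_of_stronglyMeasurable_left (m := (MeasurableSpace.comap F inferInstance)) (μ := P) hp'_sm hint hgA_int
      have hc : P[fun ω => gA ω * p' ω | (MeasurableSpace.comap F inferInstance)] =ᵐ[P] P[p' * gA | (MeasurableSpace.comap F inferInstance)] :=
        condExp_congr_ae (Filter.Eventually.of_forall fun ω => by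
          simp only [Pi.mul_apply]; exact mul_comm _ _)
      exact hc.trans hb
    -- indicator identities
    have hIval : ∀ ω, I ω = if S ω = 1 then 1 else 0 := by
      intro ω
      by_cases hω : S ω = 1
      · rw [if_pos hω, hIdef, Set.indicator_of_mem (show ω ∈ S ⁻¹' {1} by simpa using hω)]
      · rw [if_neg hω, hIdef, Set.indicator_of_notMem (show ω ∉ S ⁻¹' {1} by simpa using hω)]
    have hgAval : ∀ ω, gA ω = if Z ω ∈ s then 1 else 0 := by
      intro ω
      by_cases hω : Z ω ∈ s
      · rw [if_pos hω, hgAdef, Set.indicator_of_mem (show ω ∈ Z ⁻¹' s from hω)]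
      · rw [if_neg hω, hgAdef, Set.indicator_of_notMem (show ω ∉ Z ⁻¹' s from hω)]
    have e1 : Set.indicator (Z ⁻¹' s ∩ S ⁻¹' t) (fun ω => (1:ℝ))
        = ((if (0:ℝ) ∈ t then (1:ℝ) else 0) • gA)
          + (((if (1:ℝ) ∈ t then (1:ℝ) else 0) - (if (0:ℝ) ∈ t then (1:ℝ) else 0))
              • fun ω => gA ω * I ω) := by
      funext ω
      have hLHS : Set.indicator (Z ⁻¹' s ∩ S ⁻¹' t) (fun ω => (1:ℝ)) ω
          = if Z ω ∈ s ∧ S ω ∈ t then 1 else 0 := by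
        by_cases hmem : Z ω ∈ s ∧ S ω ∈ t
        · rw [Set.indicator_of_mem (show ω ∈ Z ⁻¹' s ∩ S ⁻¹' t from hmem), if_pos hmem]
        · rw [Set.indicator_of_notMem (show ω ∉ Z ⁻¹' s ∩ S ⁻¹' t from hmem), if_neg hmem]
      rw [Pi.add_apply, Pi.smul_apply, Pi.smul_apply, smul_eq_mul, smul_eq_mul,
        hLHS, hgAval ω, hIval ω]
      rcases hS01 ω with h0 | h1
      · rw [h0]
        by_cases hAs : Z ω ∈ s <;> by_cases h0t : (0:ℝ) ∈ t <;>
          simp [hAs, h0t]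
      · rw [h1]
        by_cases hAs : Z ω ∈ s <;> by_cases h1t : (1:ℝ) ∈ t <;>
          by_cases h0t : (0:ℝ) ∈ t <;> simp [hAs, h1t, h0t] <;> ring
    have e2 : Set.indicator (S ⁻¹' t) (fun ω => (1:ℝ))
        = (fun _ => (if (0:ℝ) ∈ t then (1:ℝ) else 0))
          + (((if (1:ℝ) ∈ t then (1:ℝ) else 0) - (if (0:ℝ) ∈ t then (1:ℝ) else 0)) • I) := by
      funext ω
      have hLHS : Set.indicator (S ⁻¹' t) (fun ω => (1:ℝ)) ω
          = if S ω ∈ t then 1 else 0 := by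
        by_cases hmem : S ω ∈ t
        · rw [Set.indicator_of_mem (show ω ∈ S ⁻¹' t from hmem), if_pos hmem]
        · rw [Set.indicator_of_notMem (show ω ∉ S ⁻¹' t from hmem), if_neg hmem]
      rw [Pi.add_apply, Pi.smul_apply, smul_eq_mul, hLHS, hIval ω]
      rcases hS01 ω with h0 | h1
      · rw [h0]
        by_cases h0t : (0:ℝ) ∈ t <;> simp [h0t]
      · rw [h1]
        by_cases h1t : (1:ℝ) ∈ t <;> by_cases h0t : (0:ℝ) ∈ t <;>
          simp [h1t, h0t] <;> ring
    -- conditional expectations of both sides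
    have lhs_eq : P⟦Z ⁻¹' s ∩ S ⁻¹' t | (MeasurableSpace.comap F inferInstance)⟧
        =ᵐ[P] fun ω => (if (0:ℝ) ∈ t then (1:ℝ) else 0) * (P[gA | (MeasurableSpace.comap F inferInstance)]) ω
          + ((if (1:ℝ) ∈ t then (1:ℝ) else 0) - (if (0:ℝ) ∈ t then (1:ℝ) else 0))
            * (p' ω * (P[gA | (MeasurableSpace.comap F inferInstance)]) ω) := by
      rw [show (Set.indicator (Z ⁻¹' s ∩ S ⁻¹' t) fun ω => (1:ℝ))
          = ((if (0:ℝ) ∈ t then (1:ℝ) else 0) • gA)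
            + (((if (1:ℝ) ∈ t then (1:ℝ) else 0) - (if (0:ℝ) ∈ t then (1:ℝ) else 0))
                • fun ω => gA ω * I ω) from e1]
      have hadd := condExp_add (μ := P) (m := (MeasurableSpace.comap F inferInstance))
        (hgA_int.smul (if (0:ℝ) ∈ t then (1:ℝ) else 0))
        (hgAI_int.smul ((if (1:ℝ) ∈ t then (1:ℝ) else 0) - (if (0:ℝ) ∈ t then (1:ℝ) else 0)))
      have hs1 := condExp_smul (μ := P) (m := (MeasurableSpace.comap F inferInstance))
        (if (0:ℝ) ∈ t then (1:ℝ) else 0) gA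
      have hs2 := condExp_smul (μ := P) (m := (MeasurableSpace.comap F inferInstance))
        ((if (1:ℝ) ∈ t then (1:ℝ) else 0) - (if (0:ℝ) ∈ t then (1:ℝ) else 0))
        (fun ω => gA ω * I ω)
      filter_upwards [hadd, hs1, hs2, hkk, hpull3] with ω w1 w2 w3 w4 w5
      rw [w1, Pi.add_apply, w2, w3, Pi.smul_apply, Pi.smul_apply, smul_eq_mul, smul_eq_mul,
        w4, w5]
    have rhs_eq : P⟦S ⁻¹' t | (MeasurableSpace.comap F inferInstance)⟧
        =ᵐ[P] fun ω => (if (0:ℝ) ∈ t then (1:ℝ) else 0)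
          + ((if (1:ℝ) ∈ t then (1:ℝ) else 0) - (if (0:ℝ) ∈ t then (1:ℝ) else 0)) * p' ω := by
      rw [show (Set.indicator (S ⁻¹' t) fun ω => (1:ℝ))
          = (fun _ => (if (0:ℝ) ∈ t then (1:ℝ) else 0))
            + (((if (1:ℝ) ∈ t then (1:ℝ) else 0) - (if (0:ℝ) ∈ t then (1:ℝ) else 0)) • I)
          from e2]
      have hadd := condExp_add (μ := P) (m := (MeasurableSpace.comap F inferInstance))
        (integrable_const (if (0:ℝ) ∈ t then (1:ℝ) else 0))
        (hI_int.smul ((if (1:ℝ) ∈ t then (1:ℝ) else 0) - (if (0:ℝ) ∈ t then (1:ℝ) else 0)))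
      have hs2 := condExp_smul (μ := P) (m := (MeasurableSpace.comap F inferInstance))
        ((if (1:ℝ) ∈ t then (1:ℝ) else 0) - (if (0:ℝ) ∈ t then (1:ℝ) else 0)) I
      have hcon : P[fun _ : Ω => (if (0:ℝ) ∈ t then (1:ℝ) else 0) | (MeasurableSpace.comap F inferInstance)]
          = fun _ => (if (0:ℝ) ∈ t then (1:ℝ) else 0) :=
        condExp_const hm _
      filter_upwards [hadd, hs2] with ω w1 w2
      rw [w1, Pi.add_apply, hcon, w2, Pi.smul_apply, smul_eq_mul]
    filter_upwards [lhs_eq, rhs_eq] with ω w1 w2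
    rw [w1, w2]
    ring

end Aux

/-- **Characterization with binary variable.**
If `S` takes values in `{0,1}`, then `Z` and `S` are conditionally independent given `F` if and
only if, for every measurable `h : 𝒳_Z × 𝒳_F → ℝ` with `E[h(Z,F)²] < ∞`, one has `Q(h) = 0`,
where `Q(h) = E[𝟙{S=1} ⬝ P(S=0|F) ⬝ h(Z,F)] − E[𝟙{S=0} ⬝ P(S=1|F) ⬝ h(Z,F)]` and `P(S=s|F)` is
a version of `E[𝟙{S=s} | σ(F)]`. -/
theorem characterization_with_binary_variable
    {Ω : Type*} [MeasurableSpace Ω] [StandardBorelSpace Ω]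
    {XF XZ : Type*} [MeasurableSpace XF] [StandardBorelSpace XF]
    [MeasurableSpace XZ] [StandardBorelSpace XZ]
    (P : Measure Ω) [IsProbabilityMeasure P]
    (S : Ω → ℝ) (hS : Measurable S) (hS01 : ∀ ω, S ω = 0 ∨ S ω = 1)
    (F : Ω → XF) (hF : Measurable F)
    (Z : Ω → XZ) (hZ : Measurable Z)
    (p0 p1 : Ω → ℝ)
    (hp0 : p0 =ᵐ[P]
      P[fun ω => if S ω = 0 then (1 : ℝ) else 0 | MeasurableSpace.comap F inferInstance])
    (hp1 : p1 =ᵐ[P]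
      P[fun ω => if S ω = 1 then (1 : ℝ) else 0 | MeasurableSpace.comap F inferInstance]) :
    CondIndepFun (MeasurableSpace.comap F inferInstance) hF.comap_le Z S P ↔
      ∀ h : XZ × XF → ℝ, Measurable h → MemLp (fun ω => h (Z ω, F ω)) 2 P →
        (∫ ω, (if S ω = 1 then (1 : ℝ) else 0) * p0 ω * h (Z ω, F ω) ∂P)
          - (∫ ω, (if S ω = 0 then (1 : ℝ) else 0) * p1 ω * h (Z ω, F ω) ∂P) = 0 := by
  have hm : (MeasurableSpace.comap F inferInstance) ≤ ‹MeasurableSpace Ω› := hF.comap_le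
  set I : Ω → ℝ := (S ⁻¹' {1}).indicator (fun _ => (1:ℝ)) with hIdef
  set p' : Ω → ℝ := P[I | (MeasurableSpace.comap F inferInstance)] with hpdef
  have hI_meas : Measurable I := measurable_const.indicator (hS (measurableSet_singleton 1))
  have hI_bdd : ∀ ω, |I ω| ≤ 1 := by
    intro ω; rw [hIdef]; exact aux_indicator_bdd _ ω
  have hI_int : Integrable I P := by
    rw [hIdef]; exact aux_indicator_int (hS (measurableSet_singleton 1))
  have hp'_int : Integrable p' P := integrable_condExp
  have hp'_sm : StronglyMeasurable[(MeasurableSpace.comap F inferInstance)] p' := stronglyMeasurable_condExp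
  have hp'_bdd : ∀ᵐ ω ∂P, |p' ω| ≤ 1 := by
    have := ae_bdd_condExp_of_ae_bdd (m := (MeasurableSpace.comap F inferInstance)) (μ := P) (R := 1) (f := I)
      (Filter.Eventually.of_forall fun ω => by simpa using hI_bdd ω)
    simpa using this
  have hIval : ∀ ω, I ω = if S ω = 1 then 1 else 0 := by
    intro ω
    by_cases hω : S ω = 1
    · rw [if_pos hω, hIdef, Set.indicator_of_mem (show ω ∈ S ⁻¹' {1} by simpa using hω)]
    · rw [if_neg hω, hIdef, Set.indicator_of_notMem (show ω ∉ S ⁻¹' {1} by simpa using hω)]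
  have hifeq1 : (fun ω => if S ω = 1 then (1:ℝ) else 0) = I := by
    funext ω; rw [hIval ω]
  have hifeq0 : (fun ω => if S ω = 0 then (1:ℝ) else 0) = (fun _ => (1:ℝ)) - I := by
    funext ω
    rw [Pi.sub_apply, hIval ω]
    rcases hS01 ω with h0 | h1
    · rw [h0]; norm_num
    · rw [h1]; norm_num
  have hp1' : p1 =ᵐ[P] p' := by
    rw [hifeq1] at hp1
    exact hp1
  have hp0' : p0 =ᵐ[P] fun ω => 1 - p' ω := by
    rw [hifeq0] at hp0
    have h1 : P[(fun _ => (1:ℝ)) - I | (MeasurableSpace.comap F inferInstance)]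
        =ᵐ[P] P[fun _ : Ω => (1:ℝ) | (MeasurableSpace.comap F inferInstance)] - P[I | (MeasurableSpace.comap F inferInstance)] :=
      condExp_sub (integrable_const 1) hI_int _
    have h2 : P[fun _ : Ω => (1:ℝ) | (MeasurableSpace.comap F inferInstance)] = fun _ => (1:ℝ) := condExp_const hm 1
    refine hp0.trans ?_
    filter_upwards [h1] with ω e1
    rw [e1, Pi.sub_apply, h2]
  -- the key identity rewriting `Q(h)` into the core form
  have Qeq : ∀ h : XZ × XF → ℝ, Measurable h → MemLp (fun ω => h (Z ω, F ω)) 2 P →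
      (∫ ω, (if S ω = 1 then (1 : ℝ) else 0) * p0 ω * h (Z ω, F ω) ∂P)
        - (∫ ω, (if S ω = 0 then (1 : ℝ) else 0) * p1 ω * h (Z ω, F ω) ∂P)
      = ∫ ω, (I ω - p' ω) * h (Z ω, F ω) ∂P := by
    intro h hh hL2
    have hint : Integrable (fun ω => h (Z ω, F ω)) P :=
      (hL2.mono_exponent (by norm_num)).integrable le_rfl
    have haesm1 : AEStronglyMeasurable (fun ω => I ω * (1 - p' ω)) P :=
      (hI_meas.mul (measurable_const.sub (hp'_sm.mono hm).measurable)).aestronglyMeasurable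
    have haesm2 : AEStronglyMeasurable (fun ω => (1 - I ω) * p' ω) P :=
      ((measurable_const.sub hI_meas).mul (hp'_sm.mono hm).measurable).aestronglyMeasurable
    have hb1 : ∀ᵐ ω ∂P, |I ω * (1 - p' ω)| ≤ 2 := by
      filter_upwards [hp'_bdd] with ω hω
      rw [abs_mul]
      have h1 : |1 - p' ω| ≤ 2 := by
        calc |1 - p' ω| ≤ |(1:ℝ)| + |p' ω| := abs_sub _ _
        _ ≤ 2 := by rw [abs_one]; linarith
      calc |I ω| * |1 - p' ω| ≤ 1 * 2 :=
        mul_le_mul (hI_bdd ω) h1 (abs_nonneg _) zero_le_one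
      _ = 2 := one_mul 2
    have hb2 : ∀ᵐ ω ∂P, |(1 - I ω) * p' ω| ≤ 2 := by
      filter_upwards [hp'_bdd] with ω hω
      rw [abs_mul]
      have h1 : |1 - I ω| ≤ 2 := by
        calc |1 - I ω| ≤ |(1:ℝ)| + |I ω| := abs_sub _ _
        _ ≤ 2 := by rw [abs_one]; linarith [hI_bdd ω]
      calc |1 - I ω| * |p' ω| ≤ 2 * 1 :=
        mul_le_mul h1 hω (abs_nonneg _) (by norm_num)
      _ = 2 := mul_one 2
    have hint1 : Integrable (fun ω => I ω * (1 - p' ω) * h (Z ω, F ω)) P :=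
      aux_integrable_bdd_mul hint haesm1 2 hb1
    have hint2 : Integrable (fun ω => (1 - I ω) * p' ω * h (Z ω, F ω)) P :=
      aux_integrable_bdd_mul hint haesm2 2 hb2
    have A1 : ∫ ω, (if S ω = 1 then (1 : ℝ) else 0) * p0 ω * h (Z ω, F ω) ∂P
        = ∫ ω, I ω * (1 - p' ω) * h (Z ω, F ω) ∂P := by
      refine integral_congr_ae ?_
      filter_upwards [hp0'] with ω e0
      rw [e0, ← hIval ω]
    have A2 : ∫ ω, (if S ω = 0 then (1 : ℝ) else 0) * p1 ω * h (Z ω, F ω) ∂P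
        = ∫ ω, (1 - I ω) * p' ω * h (Z ω, F ω) ∂P := by
      refine integral_congr_ae ?_
      filter_upwards [hp1'] with ω e1
      rw [e1, congrFun hifeq0 ω, Pi.sub_apply]
    rw [A1, A2, ← integral_sub hint1 hint2]
    refine integral_congr_ae (Filter.Eventually.of_forall fun ω => ?_)
    ring
  rw [aux_core P S hS hS01 F hF Z hZ]
  constructor
  · intro hc h hh hL2
    rw [Qeq h hh hL2]
    exact hc h hh hL2
  · intro hq h hh hL2
    have := hq h hh hL2
    rw [Qeq h hh hL2] at this
    exact this
end

section
/- (Theorem: the absolute value in the fairness regularizer can be dropped.) Suppose S takes values in {0,1}. Then sup_{h ∈ H_ZF} |Q(h)| = sup_{h ∈ H_ZF} Q(h), where H_ZF is the set of measurable functions h : 𝒳_Z × 𝒳_F → ℝ with E[h(Z,F)²] < ∞ and 0 ≤ h(z,f) ≤ 1 for all (z,f), and Q(h) := E[𝟙{S=1} · P(S=0|F) · h(Z,F)] − E[𝟙{S=0} · P(S=1|F) · h(Z,F)]. -/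
open MeasureTheory ProbabilityTheory

private theorem aux_condexp_integral {Ω : Type*} {m : MeasurableSpace Ω}
    [mΩ : MeasurableSpace Ω] (hm : m ≤ mΩ) (P : Measure Ω) [IsProbabilityMeasure P]
    {a b : Ω → ℝ} (ha : Measurable a) (hab : ∀ ω, ‖a ω‖ ≤ 1) (haint : Integrable a P) :
    ∫ ω, a ω * (P[b|m]) ω ∂P = ∫ ω, (P[a|m]) ω * (P[b|m]) ω ∂P := by
  have hcm : StronglyMeasurable[m] (P[b|m]) := stronglyMeasurable_condExp
  have h1 : Integrable (fun x => a x * (P[b|m]) x) P :=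
    integrable_condExp.bdd_mul ha.aestronglyMeasurable (Filter.Eventually.of_forall hab)
  have hint : Integrable ((P[b|m]) * a) P :=
    h1.congr (Filter.Eventually.of_forall fun ω => mul_comm _ _)
  have pull := condExp_mul_of_stronglyMeasurable_left (μ := P) hcm hint haint
  calc ∫ ω, a ω * (P[b|m]) ω ∂P
      = ∫ ω, ((P[b|m]) * a) ω ∂P := by
        simp only [Pi.mul_apply]
        exact integral_congr_ae (Filter.Eventually.of_forall fun ω => mul_comm _ _)
    _ = ∫ ω, (P[(P[b|m]) * a|m]) ω ∂P := (integral_condExp hm).symm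
    _ = ∫ ω, ((P[b|m]) * (P[a|m])) ω ∂P := integral_congr_ae pull
    _ = _ := by
        simp only [Pi.mul_apply]
        exact integral_congr_ae (Filter.Eventually.of_forall fun ω => mul_comm _ _)

/-- **The absolute value in the fairness regularizer can be dropped:**
`sup_{h ∈ H_ZF} |Q(h)| = sup_{h ∈ H_ZF} Q(h)` (suprema in the extended reals), where `H_ZF` is
the set of measurable `h : 𝒳_Z × 𝒳_F → ℝ` with `E[h(Z,F)²] < ∞` and `0 ≤ h ≤ 1` pointwise, and
`Q(h) = E[𝟙{S=1} ⬝ P(S=0|F) ⬝ h(Z,F)] − E[𝟙{S=0} ⬝ P(S=1|F) ⬝ h(Z,F)]`. -/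
theorem sup_abs_Q_eq_sup_Q
    {Ω : Type*} [MeasurableSpace Ω]
    {XF XZ : Type*} [MeasurableSpace XF] [MeasurableSpace XZ]
    (P : Measure Ω) [IsProbabilityMeasure P]
    (S : Ω → ℝ) (hS : Measurable S) (hS01 : ∀ ω, S ω = 0 ∨ S ω = 1)
    (F : Ω → XF) (hF : Measurable F)
    (Z : Ω → XZ) (hZ : Measurable Z)
    (p0 p1 : Ω → ℝ)
    (hp0 : p0 =ᵐ[P]
      P[fun ω => if S ω = 0 then (1 : ℝ) else 0 | MeasurableSpace.comap F inferInstance])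
    (hp1 : p1 =ᵐ[P]
      P[fun ω => if S ω = 1 then (1 : ℝ) else 0 | MeasurableSpace.comap F inferInstance])
    (Q : (XZ × XF → ℝ) → ℝ)
    (hQ : ∀ h : XZ × XF → ℝ,
      Q h = (∫ ω, (if S ω = 1 then (1 : ℝ) else 0) * p0 ω * h (Z ω, F ω) ∂P)
        - ∫ ω, (if S ω = 0 then (1 : ℝ) else 0) * p1 ω * h (Z ω, F ω) ∂P) :
    (⨆ (h : XZ × XF → ℝ) (_ : Measurable h ∧ MemLp (fun ω => h (Z ω, F ω)) 2 P ∧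
        ∀ p, 0 ≤ h p ∧ h p ≤ 1), ((|Q h| : ℝ) : EReal))
    = ⨆ (h : XZ × XF → ℝ) (_ : Measurable h ∧ MemLp (fun ω => h (Z ω, F ω)) 2 P ∧
        ∀ p, 0 ≤ h p ∧ h p ≤ 1), ((Q h : ℝ) : EReal) := by
  have hm : MeasurableSpace.comap F inferInstance ≤ ‹MeasurableSpace Ω› := hF.comap_le
  set i0 : Ω → ℝ := fun ω => if S ω = 0 then 1 else 0 with hi0
  set i1 : Ω → ℝ := fun ω => if S ω = 1 then 1 else 0 with hi1
  have hi0m : Measurable i0 :=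
    Measurable.ite (hS (measurableSet_singleton 0)) measurable_const measurable_const
  have hi1m : Measurable i1 :=
    Measurable.ite (hS (measurableSet_singleton 1)) measurable_const measurable_const
  have hi0b : ∀ ω, ‖i0 ω‖ ≤ 1 := by intro ω; simp only [hi0]; split <;> norm_num
  have hi1b : ∀ ω, ‖i1 ω‖ ≤ 1 := by intro ω; simp only [hi1]; split <;> norm_num
  have hi0int : Integrable i0 P :=
    (integrable_const (1:ℝ)).mono' hi0m.aestronglyMeasurable (Filter.Eventually.of_forall hi0b)
  have hi1int : Integrable i1 P :=
    (integrable_const (1:ℝ)).mono' hi1m.aestronglyMeasurable (Filter.Eventually.of_forall hi1b)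
  have hp0int : Integrable p0 P := integrable_condExp.congr hp0.symm
  have hp1int : Integrable p1 P := integrable_condExp.congr hp1.symm
  -- key : ∫ i1 * p0 = ∫ i0 * p1
  have key : ∫ ω, i1 ω * p0 ω ∂P = ∫ ω, i0 ω * p1 ω ∂P := by
    have e1 : ∫ ω, i1 ω * p0 ω ∂P
        = ∫ ω, i1 ω * (P[i0|MeasurableSpace.comap F inferInstance]) ω ∂P :=
      integral_congr_ae (hp0.mono fun ω h => by simp only [h])
    have e2 : ∫ ω, i0 ω * p1 ω ∂P
        = ∫ ω, i0 ω * (P[i1|MeasurableSpace.comap F inferInstance]) ω ∂P :=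
      integral_congr_ae (hp1.mono fun ω h => by simp only [h])
    rw [e1, e2, aux_condexp_integral hF.comap_le P hi1m hi1b hi1int, aux_condexp_integral hF.comap_le P hi0m hi0b hi0int]
    exact integral_congr_ae (Filter.Eventually.of_forall fun ω => mul_comm _ _)
  -- Q is anti-symmetric under h ↦ 1 - h
  have hQneg : ∀ h : XZ × XF → ℝ, Measurable h → (∀ p, 0 ≤ h p ∧ h p ≤ 1) →
      Q (fun p => 1 - h p) = - Q h := by
    intro h hhm hhb
    have hc : Measurable fun ω => h (Z ω, F ω) := hhm.comp (hZ.prodMk hF)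
    have hcb : ∀ ω, ‖i1 ω * h (Z ω, F ω)‖ ≤ 1 := by
      intro ω
      rw [norm_mul]
      calc ‖i1 ω‖ * ‖h (Z ω, F ω)‖ ≤ 1 * 1 := by
            refine mul_le_mul (hi1b ω) ?_ (norm_nonneg _) zero_le_one
            rw [Real.norm_eq_abs, abs_le]
            exact ⟨by linarith [(hhb (Z ω, F ω)).1], (hhb (Z ω, F ω)).2⟩
        _ = 1 := one_mul 1
    have hcb0 : ∀ ω, ‖i0 ω * h (Z ω, F ω)‖ ≤ 1 := by
      intro ω
      rw [norm_mul]
      calc ‖i0 ω‖ * ‖h (Z ω, F ω)‖ ≤ 1 * 1 := by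
            refine mul_le_mul (hi0b ω) ?_ (norm_nonneg _) zero_le_one
            rw [Real.norm_eq_abs, abs_le]
            exact ⟨by linarith [(hhb (Z ω, F ω)).1], (hhb (Z ω, F ω)).2⟩
        _ = 1 := one_mul 1
    have hint1h : Integrable (fun ω => i1 ω * p0 ω * h (Z ω, F ω)) P := by
      have := hp0int.bdd_mul (f := fun ω => i1 ω * h (Z ω, F ω)) (c := 1)
        ((hi1m.mul hc).aestronglyMeasurable) (Filter.Eventually.of_forall hcb)
      exact this.congr (Filter.Eventually.of_forall fun ω => by ring)
    have hint0h : Integrable (fun ω => i0 ω * p1 ω * h (Z ω, F ω)) P := by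
      have := hp1int.bdd_mul (f := fun ω => i0 ω * h (Z ω, F ω)) (c := 1)
        ((hi0m.mul hc).aestronglyMeasurable) (Filter.Eventually.of_forall hcb0)
      exact this.congr (Filter.Eventually.of_forall fun ω => by ring)
    have hint1 : Integrable (fun ω => i1 ω * p0 ω) P :=
      hp0int.bdd_mul hi1m.aestronglyMeasurable (Filter.Eventually.of_forall hi1b)
    have hint0 : Integrable (fun ω => i0 ω * p1 ω) P :=
      hp1int.bdd_mul hi0m.aestronglyMeasurable (Filter.Eventually.of_forall hi0b)
    have s1 : ∫ ω, i1 ω * p0 ω * (1 - h (Z ω, F ω)) ∂P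
        = ∫ ω, i1 ω * p0 ω ∂P - ∫ ω, i1 ω * p0 ω * h (Z ω, F ω) ∂P := by
      rw [← integral_sub hint1 hint1h]
      exact integral_congr_ae (Filter.Eventually.of_forall fun ω => by ring)
    have s0 : ∫ ω, i0 ω * p1 ω * (1 - h (Z ω, F ω)) ∂P
        = ∫ ω, i0 ω * p1 ω ∂P - ∫ ω, i0 ω * p1 ω * h (Z ω, F ω) ∂P := by
      rw [← integral_sub hint0 hint0h]
      exact integral_congr_ae (Filter.Eventually.of_forall fun ω => by ring)
    rw [hQ, hQ h]
    simp only [← hi0, ← hi1] at *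
    rw [s1, s0, key]
    ring
  -- now the supremum argument
  refine le_antisymm ?_ ?_
  · refine iSup_le fun h => iSup_le fun hh => ?_
    rcases abs_choice (Q h) with hab | hab
    · rw [hab]
      exact le_iSup_of_le h (le_iSup_of_le hh le_rfl)
    · have hh' : Measurable (fun p => 1 - h p) ∧
          MemLp (fun ω => (1 : ℝ) - h (Z ω, F ω)) 2 P ∧
          ∀ p, 0 ≤ 1 - h p ∧ 1 - h p ≤ 1 := by
        refine ⟨measurable_const.sub hh.1, (memLp_const 1).sub hh.2.1, fun p => ?_⟩
        have := hh.2.2 p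
        constructor <;> linarith [this.1, this.2]
      have : |Q h| = Q (fun p => 1 - h p) := by
        rw [hQneg h hh.1 (fun p => hh.2.2 p), hab]
      rw [this]
      exact le_iSup_of_le (fun p => 1 - h p) (le_iSup_of_le hh' le_rfl)
  · refine iSup_le fun h => iSup_le fun hh => ?_
    refine le_trans ?_ (le_iSup_of_le h (le_iSup_of_le hh le_rfl))
    exact_mod_cast le_abs_self (Q h)
end

section
/- (Vanishing of the regularizer implies conditional fairness.) Suppose S takes values in {0,1}. If L_fair(Z,F,S) := sup_{h ∈ H_ZF} |Q(h)| = 0, then Z and S are conditionally independent given F. Here H_ZF is the set of measurable functions h : 𝒳_Z × 𝒳_F → ℝ with E[h(Z,F)²] < ∞ and 0 ≤ h(z,f) ≤ 1 for all (z,f), and Q(h) := E[𝟙{S=1} · P(S=0|F) · h(Z,F)] − E[𝟙{S=0} · P(S=1|F) · h(Z,F)]. -/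
open MeasureTheory ProbabilityTheory

/-- **Vanishing of the regularizer implies conditional fairness.**
If `S` takes values in `{0,1}` and `L_fair(Z,F,S) = sup_{h ∈ H_ZF} |Q(h)| = 0` (supremum in the
extended reals), then `Z` and `S` are conditionally independent given `F`. Here `H_ZF` is the
set of measurable `h : 𝒳_Z × 𝒳_F → ℝ` with `E[h(Z,F)²] < ∞` and `0 ≤ h ≤ 1` pointwise, and
`Q(h) = E[𝟙{S=1} ⬝ P(S=0|F) ⬝ h(Z,F)] − E[𝟙{S=0} ⬝ P(S=1|F) ⬝ h(Z,F)]`. -/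
theorem regularizer_eq_zero_implies_condIndep
    {Ω : Type*} [MeasurableSpace Ω] [StandardBorelSpace Ω]
    {XF XZ : Type*} [MeasurableSpace XF] [StandardBorelSpace XF]
    [MeasurableSpace XZ] [StandardBorelSpace XZ]
    (P : Measure Ω) [IsProbabilityMeasure P]
    (S : Ω → ℝ) (hS : Measurable S) (hS01 : ∀ ω, S ω = 0 ∨ S ω = 1)
    (F : Ω → XF) (hF : Measurable F)
    (Z : Ω → XZ) (hZ : Measurable Z)
    (p0 p1 : Ω → ℝ)
    (hp0 : p0 =ᵐ[P]
      P[fun ω => if S ω = 0 then (1 : ℝ) else 0 | MeasurableSpace.comap F inferInstance])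
    (hp1 : p1 =ᵐ[P]
      P[fun ω => if S ω = 1 then (1 : ℝ) else 0 | MeasurableSpace.comap F inferInstance])
    (Q : (XZ × XF → ℝ) → ℝ)
    (hQ : ∀ h : XZ × XF → ℝ,
      Q h = (∫ ω, (if S ω = 1 then (1 : ℝ) else 0) * p0 ω * h (Z ω, F ω) ∂P)
        - ∫ ω, (if S ω = 0 then (1 : ℝ) else 0) * p1 ω * h (Z ω, F ω) ∂P)
    (hLfair : (⨆ (h : XZ × XF → ℝ) (_ : Measurable h ∧ MemLp (fun ω => h (Z ω, F ω)) 2 P ∧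
        ∀ p, 0 ≤ h p ∧ h p ≤ 1), ((|Q h| : ℝ) : EReal)) = 0) :
    CondIndepFun (MeasurableSpace.comap F inferInstance) hF.comap_le Z S P := by
  classical
  letI mΩ : MeasurableSpace Ω := ‹_›
  set m : MeasurableSpace Ω := MeasurableSpace.comap F inferInstance with hm_def
  letI mΩ' : MeasurableSpace Ω := mΩ
  have hm : m ≤ mΩ := hF.comap_le
  set T : Ω → ℝ := fun ω => if S ω = 1 then (1 : ℝ) else 0 with hT_def
  set T0 : Ω → ℝ := fun ω => if S ω = 0 then (1 : ℝ) else 0 with hT0_def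
  have hT_meas : Measurable T :=
    Measurable.ite (hS (measurableSet_singleton 1)) measurable_const measurable_const
  have hT0_meas : Measurable T0 :=
    Measurable.ite (hS (measurableSet_singleton 0)) measurable_const measurable_const
  have hT_bd : ∀ ω, ‖T ω‖ ≤ 1 := by
    intro ω; simp only [hT_def]; split <;> simp
  have hT0_bd : ∀ ω, ‖T0 ω‖ ≤ 1 := by
    intro ω; simp only [hT0_def]; split <;> simp
  have hT_int : Integrable T P :=
    (integrable_const (1 : ℝ)).mono' hT_meas.aestronglyMeasurable (ae_of_all _ hT_bd)
  have hT0_int : Integrable T0 P :=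
    (integrable_const (1 : ℝ)).mono' hT0_meas.aestronglyMeasurable (ae_of_all _ hT0_bd)
  have hTT : ∀ ω, T0 ω + T ω = 1 := by
    intro ω
    rcases hS01 ω with h | h <;> simp [hT_def, hT0_def, h]
  -- integrability helper
  have hint : ∀ q : Ω → ℝ, Integrable q P → ∀ u : Ω → ℝ, AEStronglyMeasurable u P →
      (∀ᵐ ω ∂P, ‖u ω‖ ≤ 1) → Integrable (fun ω => q ω * u ω) P := by
    intro q hq u hu hub
    exact (hq.bdd_mul hu hub).congr (ae_of_all _ fun ω => mul_comm _ _)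
  have hp1_int : Integrable p1 P := integrable_condExp.congr hp1.symm
  have hp0_int : Integrable p0 P := integrable_condExp.congr hp0.symm
  -- a.e. bounds
  have hbd_ce : ∀ f : Ω → ℝ, Integrable f P → (∀ ω, 0 ≤ f ω ∧ f ω ≤ 1) →
      ∀ᵐ ω ∂P, ‖(P[f|m]) ω‖ ≤ 1 := by
    intro f hf hb
    have h1 : 0 ≤ᵐ[P] P[f|m] := condExp_nonneg (ae_of_all _ fun ω => (hb ω).1)
    have h2 : P[f|m] ≤ᵐ[P] P[fun _ => (1 : ℝ)|m] :=
      condExp_mono hf (integrable_const 1) (ae_of_all _ fun ω => (hb ω).2)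
    rw [condExp_const hm] at h2
    filter_upwards [h1, h2] with ω h1 h2
    simp only [Pi.zero_apply] at h1
    rw [Real.norm_eq_abs, abs_le]
    exact ⟨by linarith, h2⟩
  have hT_bd01 : ∀ ω, 0 ≤ T ω ∧ T ω ≤ 1 := by
    intro ω; simp only [hT_def]; split <;> norm_num
  have hT0_bd01 : ∀ ω, 0 ≤ T0 ω ∧ T0 ω ≤ 1 := by
    intro ω; simp only [hT0_def]; split <;> norm_num
  have hp1_bd : ∀ᵐ ω ∂P, ‖p1 ω‖ ≤ 1 := by
    filter_upwards [hp1, hbd_ce T hT_int hT_bd01] with ω h1 h2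
    rw [h1]; exact h2
  have hp0_bd : ∀ᵐ ω ∂P, ‖p0 ω‖ ≤ 1 := by
    filter_upwards [hp0, hbd_ce T0 hT0_int hT0_bd01] with ω h1 h2
    rw [h1]; exact h2
  -- p0 + p1 = 1 a.e.
  have hsum : ∀ᵐ ω ∂P, p0 ω + p1 ω = 1 := by
    have hadd : P[T0 + T|m] =ᵐ[P] P[T0|m] + P[T|m] := condExp_add hT0_int hT_int _
    have hone : P[T0 + T|m] = fun _ => (1 : ℝ) := by
      have h : T0 + T = fun _ => (1 : ℝ) := funext fun ω => hTT ω
      rw [h, condExp_const hm]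
    rw [hone] at hadd
    filter_upwards [hp0, hp1, hadd] with ω h0 h1 ha
    rw [h0, h1, ← Pi.add_apply, ← ha]
  -- Q h = 0 for admissible h
  have hQ0 : ∀ h : XZ × XF → ℝ, Measurable h → (∀ p, 0 ≤ h p ∧ h p ≤ 1) → Q h = 0 := by
    intro h hmeas hbd
    have hmem : MemLp (fun ω => h (Z ω, F ω)) 2 P :=
      MemLp.of_bound ((hmeas.comp (hZ.prodMk hF)).aestronglyMeasurable) 1
        (ae_of_all _ fun ω => by
          rw [Real.norm_eq_abs, abs_le]
          exact ⟨by linarith [(hbd (Z ω, F ω)).1], (hbd (Z ω, F ω)).2⟩)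
    have hle : ((|Q h| : ℝ) : EReal) ≤ 0 := by
      rw [← hLfair]
      exact le_iSup₂ (f := fun (h : XZ × XF → ℝ) _ => ((|Q h| : ℝ) : EReal)) h ⟨hmeas, hmem, hbd⟩
    have h2 : |Q h| ≤ 0 := by exact_mod_cast hle
    exact abs_nonpos_iff.mp h2
  -- key integral identity
  have key : ∀ h : XZ × XF → ℝ, Measurable h → (∀ p, 0 ≤ h p ∧ h p ≤ 1) →
      ∫ ω, T ω * h (Z ω, F ω) ∂P = ∫ ω, p1 ω * h (Z ω, F ω) ∂P := by
    intro h hmeas hbd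
    have hk_meas : Measurable fun ω => h (Z ω, F ω) := hmeas.comp (hZ.prodMk hF)
    have hk_asm : AEStronglyMeasurable (fun ω => h (Z ω, F ω)) P := hk_meas.aestronglyMeasurable
    have hk_bd : ∀ᵐ ω ∂P, ‖h (Z ω, F ω)‖ ≤ 1 := ae_of_all _ fun ω => by
      rw [Real.norm_eq_abs, abs_le]
      exact ⟨by linarith [(hbd (Z ω, F ω)).1], (hbd (Z ω, F ω)).2⟩
    have int_Tp0h : Integrable (fun ω => T ω * p0 ω * h (Z ω, F ω)) P :=
      hint _ (hint T hT_int p0 hp0_int.1 hp0_bd) _ hk_asm hk_bd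
    have int_Tp1h : Integrable (fun ω => T ω * p1 ω * h (Z ω, F ω)) P :=
      hint _ (hint T hT_int p1 hp1_int.1 hp1_bd) _ hk_asm hk_bd
    have int_T0p1h : Integrable (fun ω => T0 ω * p1 ω * h (Z ω, F ω)) P :=
      hint _ (hint T0 hT0_int p1 hp1_int.1 hp1_bd) _ hk_asm hk_bd
    have hq : ∫ ω, T ω * p0 ω * h (Z ω, F ω) ∂P = ∫ ω, T0 ω * p1 ω * h (Z ω, F ω) ∂P := by
      have h0 := hQ0 h hmeas hbd
      rw [hQ h] at h0
      linarith
    calc ∫ ω, T ω * h (Z ω, F ω) ∂P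
        = ∫ ω, (T ω * p0 ω * h (Z ω, F ω) + T ω * p1 ω * h (Z ω, F ω)) ∂P := by
          apply integral_congr_ae
          filter_upwards [hsum] with ω hω
          have h1 : T ω * p0 ω * h (Z ω, F ω) + T ω * p1 ω * h (Z ω, F ω)
              = T ω * (p0 ω + p1 ω) * h (Z ω, F ω) := by ring
          rw [h1, hω, mul_one]
      _ = (∫ ω, T ω * p0 ω * h (Z ω, F ω) ∂P) + ∫ ω, T ω * p1 ω * h (Z ω, F ω) ∂P :=
          integral_add int_Tp0h int_Tp1h
      _ = (∫ ω, T0 ω * p1 ω * h (Z ω, F ω) ∂P) + ∫ ω, T ω * p1 ω * h (Z ω, F ω) ∂P := by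
          rw [hq]
      _ = ∫ ω, (T0 ω * p1 ω * h (Z ω, F ω) + T ω * p1 ω * h (Z ω, F ω)) ∂P :=
          (integral_add int_T0p1h int_Tp1h).symm
      _ = ∫ ω, p1 ω * h (Z ω, F ω) ∂P := by
          apply integral_congr_ae
          apply ae_of_all
          intro ω
          dsimp only
          have h1 : T0 ω * p1 ω * h (Z ω, F ω) + T ω * p1 ω * h (Z ω, F ω)
              = (T0 ω + T ω) * (p1 ω * h (Z ω, F ω)) := by ring
          rw [h1, hTT ω, one_mul]
  -- Step D: conditional expectation characterization
  have stepD : ∀ s : Set XZ, MeasurableSet s →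
      (fun ω => (P[(Z ⁻¹' s).indicator (fun _ => (1 : ℝ))|m]) ω * p1 ω)
        =ᵐ[P] P[fun ω => (Z ⁻¹' s).indicator (fun _ => (1 : ℝ)) ω * T ω|m] := by
    intro s hs
    set g : Ω → ℝ := (Z ⁻¹' s).indicator (fun _ => (1 : ℝ)) with hg_def
    have hg_meas : Measurable g := measurable_const.indicator (hZ hs)
    have hg_bd : ∀ ω, ‖g ω‖ ≤ 1 := by
      intro ω
      simp only [hg_def, Set.indicator_apply]
      split <;> simp
    have hg_int : Integrable g P :=
      (integrable_const (1 : ℝ)).mono' hg_meas.aestronglyMeasurable (ae_of_all _ hg_bd)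
    have hf_int : Integrable (fun ω => g ω * T ω) P :=
      hint g hg_int T hT_meas.aestronglyMeasurable (ae_of_all _ hT_bd)
    have hX_int : Integrable (fun ω => (P[g|m]) ω * p1 ω) P :=
      hint _ integrable_condExp p1 hp1_int.1 hp1_bd
    refine ae_eq_condExp_of_forall_setIntegral_eq hm hf_int
      (fun C _ _ => hX_int.integrableOn) ?_ ?_
    · intro C hC _
      rw [hm_def, MeasurableSpace.measurableSet_comap] at hC
      obtain ⟨B, hB, rfl⟩ := hC
      have hCm : MeasurableSet (F ⁻¹' B) := hF hB
      have hCm' : MeasurableSet[m] (F ⁻¹' B) := ⟨B, hB, rfl⟩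
      set h : XZ × XF → ℝ :=
        fun p => (if p.1 ∈ s then (1 : ℝ) else 0) * (if p.2 ∈ B then (1 : ℝ) else 0) with hh_def
      have hh_meas : Measurable h := by
        apply Measurable.mul
        · exact Measurable.ite (measurable_fst hs) measurable_const measurable_const
        · exact Measurable.ite (measurable_snd hB) measurable_const measurable_const
      have hh_bd : ∀ p, 0 ≤ h p ∧ h p ≤ 1 := by
        intro p
        simp only [hh_def]
        constructor
        · split <;> split <;> norm_num
        · split <;> split <;> norm_num
      have hkey := key h hh_meas hh_bd
      have hpt : ∀ (q : Ω → ℝ) (ω : Ω), (F ⁻¹' B).indicator (fun ω' => q ω' * g ω') ω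
          = q ω * h (Z ω, F ω) := by
        intro q ω
        simp only [Set.indicator_apply, hh_def, hg_def, Set.mem_preimage]
        by_cases hωB : F ω ∈ B <;> by_cases hωs : Z ω ∈ s <;> simp [hωB, hωs]
      have hfg_int : Integrable ((P[T|m]) * g) P :=
        hint _ integrable_condExp g hg_meas.aestronglyMeasurable (ae_of_all _ hg_bd)
      have hpull : P[(P[T|m]) * g|m] =ᵐ[P] (P[T|m]) * P[g|m] :=
        condExp_mul_of_stronglyMeasurable_left stronglyMeasurable_condExp hfg_int hg_int
      calc ∫ ω in F ⁻¹' B, (P[g|m]) ω * p1 ω ∂P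
          = ∫ ω in F ⁻¹' B, (P[(P[T|m]) * g|m]) ω ∂P := by
            apply setIntegral_congr_ae hCm
            filter_upwards [hp1, hpull] with ω h1 h2 _
            rw [h1, h2, Pi.mul_apply, mul_comm]
        _ = ∫ ω in F ⁻¹' B, ((P[T|m]) * g) ω ∂P := setIntegral_condExp hm hfg_int hCm'
        _ = ∫ ω in F ⁻¹' B, p1 ω * g ω ∂P := by
            apply setIntegral_congr_ae hCm
            filter_upwards [hp1] with ω h1 _
            rw [Pi.mul_apply, h1]
        _ = ∫ ω, p1 ω * h (Z ω, F ω) ∂P := by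
            rw [← integral_indicator hCm]
            exact integral_congr_ae (ae_of_all _ (hpt p1))
        _ = ∫ ω, T ω * h (Z ω, F ω) ∂P := hkey.symm
        _ = ∫ ω in F ⁻¹' B, T ω * g ω ∂P := by
            rw [← integral_indicator hCm]
            exact (integral_congr_ae (ae_of_all _ (hpt T))).symm
        _ = ∫ ω in F ⁻¹' B, g ω * T ω ∂P :=
            setIntegral_congr_ae hCm (ae_of_all _ fun ω _ => mul_comm _ _)
    · refine ⟨(P[g|m]) * (P[T|m]), stronglyMeasurable_condExp.mul stronglyMeasurable_condExp, ?_⟩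
      filter_upwards [hp1] with ω h1
      rw [Pi.mul_apply, h1]
  -- smul helper
  have hsmul : ∀ (c : ℝ) (f : Ω → ℝ), P[fun ω => c * f ω|m] =ᵐ[P] fun ω => c * (P[f|m]) ω := by
    intro c f
    have h1 : (fun ω => c * f ω) = c • f := rfl
    rw [h1]
    exact (condExp_smul c f _).trans (ae_of_all _ fun ω => rfl)
  -- conclusion
  rw [condIndepFun_iff_condExp_inter_preimage_eq_mul hZ hS]
  intro s t hs ht
  set g : Ω → ℝ := (Z ⁻¹' s).indicator (fun ω => (1 : ℝ)) with hg_def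
  have hg_meas : Measurable g := measurable_const.indicator (hZ hs)
  have hg_bd : ∀ ω, ‖g ω‖ ≤ 1 := by
    intro ω
    simp only [hg_def, Set.indicator_apply]
    split <;> simp
  have hg_int : Integrable g P :=
    (integrable_const (1 : ℝ)).mono' hg_meas.aestronglyMeasurable (ae_of_all _ hg_bd)
  have hgT_int : Integrable (fun ω => g ω * T ω) P :=
    hint g hg_int T hT_meas.aestronglyMeasurable (ae_of_all _ hT_bd)
  obtain ⟨a, b, hit⟩ : ∃ a b : ℝ, (S ⁻¹' t).indicator (fun ω => (1 : ℝ))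
      = (fun _ => a) + fun ω => (b - a) * T ω := by
    refine ⟨if (0 : ℝ) ∈ t then 1 else 0, if (1 : ℝ) ∈ t then 1 else 0, funext fun ω => ?_⟩
    simp only [Set.indicator_apply, Set.mem_preimage, hT_def, Pi.add_apply]
    rcases hS01 ω with h | h <;> rw [h] <;> norm_num
  have hgt : (Z ⁻¹' s ∩ S ⁻¹' t).indicator (fun ω => (1 : ℝ))
      = (fun ω => a * g ω) + fun ω => (b - a) * (g ω * T ω) := by
    funext ω
    have h2 : (Z ⁻¹' s ∩ S ⁻¹' t).indicator (fun ω => (1 : ℝ)) ω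
        = g ω * ((S ⁻¹' t).indicator (fun ω => (1 : ℝ)) ω) := by
      simp only [hg_def, Set.indicator_apply, Set.mem_inter_iff]
      by_cases h1 : ω ∈ Z ⁻¹' s <;> by_cases h2 : ω ∈ S ⁻¹' t <;> simp [h1, h2]
    rw [Pi.add_apply, h2, hit, Pi.add_apply]
    ring
  have L1 : P⟦Z ⁻¹' s ∩ S ⁻¹' t|m⟧
      =ᵐ[P] fun ω => a * (P[g|m]) ω + (b - a) * (P[fun ω => g ω * T ω|m]) ω := by
    rw [hgt]
    refine (condExp_add (hg_int.const_mul a) (hgT_int.const_mul (b - a)) _).trans ?_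
    filter_upwards [hsmul a g, hsmul (b - a) (fun ω => g ω * T ω)] with ω e1 e2
    rw [Pi.add_apply, e1, e2]
  have R1 : P⟦S ⁻¹' t|m⟧ =ᵐ[P] fun ω => a + (b - a) * p1 ω := by
    rw [hit]
    refine (condExp_add (integrable_const a) (hT_int.const_mul (b - a)) _).trans ?_
    have hconst : P[fun _ => a|m] = fun _ => a := condExp_const hm a
    filter_upwards [hsmul (b - a) T, hp1] with ω e1 e2
    rw [Pi.add_apply, hconst, e1, e2]
  have L2 := stepD s hs
  filter_upwards [L1, L2, R1] with ω h1 h2 h3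
  rw [h1, h3, ← h2]
  ring
end

section
/- (Theorem: the L2 surrogate regularizer upper-bounds the fairness regularizer.) Suppose S takes values in {0,1}. Then L'_fair ≥ L_fair, where L_fair := sup_{h ∈ H_ZF} |Q(h)|, L'_fair := sup_{h ∈ H_ZF} Q'(h), C := E[𝟙{S=1} · P(S=0|F)], Q(h) := E[𝟙{S=1} · P(S=0|F) · h(Z,F)] − E[𝟙{S=0} · P(S=1|F) · h(Z,F)], Q'(h) := C − E[𝟙{S=1} · P(S=0|F) · (1 − h(Z,F))²] − E[𝟙{S=0} · P(S=1|F) · h(Z,F)²], and H_ZF is the set of measurable functions h : 𝒳_Z × 𝒳_F → ℝ with E[h(Z,F)²] < ∞ and 0 ≤ h(z,f) ≤ 1 for all (z,f). -/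
open MeasureTheory ProbabilityTheory

/-- **The L2 surrogate regularizer upper-bounds the fairness regularizer:**
`L'_fair = sup_{h ∈ H_ZF} Q'(h) ≥ sup_{h ∈ H_ZF} |Q(h)| = L_fair` (suprema in the extended
reals), where `C = E[𝟙{S=1} ⬝ P(S=0|F)]`,
`Q(h) = E[𝟙{S=1} ⬝ P(S=0|F) ⬝ h(Z,F)] − E[𝟙{S=0} ⬝ P(S=1|F) ⬝ h(Z,F)]`,
`Q'(h) = C − E[𝟙{S=1} ⬝ P(S=0|F) ⬝ (1 − h(Z,F))²] − E[𝟙{S=0} ⬝ P(S=1|F) ⬝ h(Z,F)²]`, and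
`H_ZF` is the set of measurable `h : 𝒳_Z × 𝒳_F → ℝ` with `E[h(Z,F)²] < ∞` and `0 ≤ h ≤ 1`
pointwise; the versions `P(S=s|F)` are chosen with values in `[0,1]` everywhere. -/
theorem L2_surrogate_regularizer_upper_bounds_fairness_regularizer
    {Ω : Type*} [MeasurableSpace Ω]
    {XF XZ : Type*} [MeasurableSpace XF] [MeasurableSpace XZ]
    (P : Measure Ω) [IsProbabilityMeasure P]
    (S : Ω → ℝ) (hS : Measurable S) (hS01 : ∀ ω, S ω = 0 ∨ S ω = 1)
    (F : Ω → XF) (hF : Measurable F)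
    (Z : Ω → XZ) (hZ : Measurable Z)
    (p0 p1 : Ω → ℝ)
    (hp0 : p0 =ᵐ[P]
      P[fun ω => if S ω = 0 then (1 : ℝ) else 0 | MeasurableSpace.comap F inferInstance])
    (hp1 : p1 =ᵐ[P]
      P[fun ω => if S ω = 1 then (1 : ℝ) else 0 | MeasurableSpace.comap F inferInstance])
    (hp0bd : ∀ ω, 0 ≤ p0 ω ∧ p0 ω ≤ 1) (hp1bd : ∀ ω, 0 ≤ p1 ω ∧ p1 ω ≤ 1)
    (Q Q' : (XZ × XF → ℝ) → ℝ)
    (hQ : ∀ h : XZ × XF → ℝ,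
      Q h = (∫ ω, (if S ω = 1 then (1 : ℝ) else 0) * p0 ω * h (Z ω, F ω) ∂P)
        - ∫ ω, (if S ω = 0 then (1 : ℝ) else 0) * p1 ω * h (Z ω, F ω) ∂P)
    (hQ' : ∀ h : XZ × XF → ℝ,
      Q' h = (∫ ω, (if S ω = 1 then (1 : ℝ) else 0) * p0 ω ∂P)
        - (∫ ω, (if S ω = 1 then (1 : ℝ) else 0) * p0 ω * (1 - h (Z ω, F ω)) ^ 2 ∂P)
        - ∫ ω, (if S ω = 0 then (1 : ℝ) else 0) * p1 ω * h (Z ω, F ω) ^ 2 ∂P) :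
    (⨆ (h : XZ × XF → ℝ) (_ : Measurable h ∧ MemLp (fun ω => h (Z ω, F ω)) 2 P ∧
        ∀ p, 0 ≤ h p ∧ h p ≤ 1), ((Q' h : ℝ) : EReal))
    ≥ ⨆ (h : XZ × XF → ℝ) (_ : Measurable h ∧ MemLp (fun ω => h (Z ω, F ω)) 2 P ∧
        ∀ p, 0 ≤ h p ∧ h p ≤ 1), ((|Q h| : ℝ) : EReal) := by
  classical
  have hm : MeasurableSpace.comap F inferInstance ≤ ‹MeasurableSpace Ω› := hF.comap_le
  set ind1 : Ω → ℝ := fun ω => if S ω = 1 then 1 else 0 with hind1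
  set ind0 : Ω → ℝ := fun ω => if S ω = 0 then 1 else 0 with hind0
  have hind1m : Measurable ind1 :=
    Measurable.ite (hS (measurableSet_singleton 1)) measurable_const measurable_const
  have hind0m : Measurable ind0 :=
    Measurable.ite (hS (measurableSet_singleton 0)) measurable_const measurable_const
  have hind1bd : ∀ ω, 0 ≤ ind1 ω ∧ ind1 ω ≤ 1 := by
    intro ω; simp only [hind1]; split <;> norm_num
  have hind0bd : ∀ ω, 0 ≤ ind0 ω ∧ ind0 ω ≤ 1 := by
    intro ω; simp only [hind0]; split <;> norm_num
  set q0 : Ω → ℝ := P[ind0|MeasurableSpace.comap F inferInstance] with hq0_def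
  set q1 : Ω → ℝ := P[ind1|MeasurableSpace.comap F inferInstance] with hq1_def
  have hq0m : StronglyMeasurable[MeasurableSpace.comap F inferInstance] q0 := stronglyMeasurable_condExp
  have hq1m : StronglyMeasurable[MeasurableSpace.comap F inferInstance] q1 := stronglyMeasurable_condExp
  have hp0sm : AEStronglyMeasurable p0 P :=
    ((hq0m.mono hm).aestronglyMeasurable).congr hp0.symm
  have hp1sm : AEStronglyMeasurable p1 P :=
    ((hq1m.mono hm).aestronglyMeasurable).congr hp1.symm
  -- integrability of bounded a.e.-strongly-measurable functions
  have hInt : ∀ f : Ω → ℝ, AEStronglyMeasurable f P → (∀ ω, ‖f ω‖ ≤ 1) → Integrable f P :=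
    fun f hf hb => memLp_one_iff_integrable.mp (MemLp.of_bound hf 1 (ae_of_all _ hb))
  -- the key identity : ∫ ind1 * p0 = ∫ ind0 * p1
  have hCkey : ∫ ω, ind1 ω * p0 ω ∂P = ∫ ω, ind0 ω * p1 ω ∂P := by
    have hind1int : Integrable ind1 P := hInt ind1 hind1m.aestronglyMeasurable
      (fun ω => by rw [Real.norm_eq_abs, abs_le]; constructor <;> [linarith [(hind1bd ω).1]; exact (hind1bd ω).2])
    have hind0int : Integrable ind0 P := hInt ind0 hind0m.aestronglyMeasurable
      (fun ω => by rw [Real.norm_eq_abs, abs_le]; constructor <;> [linarith [(hind0bd ω).1]; exact (hind0bd ω).2])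
    have hq0int : Integrable q0 P := integrable_condExp
    have hq1int : Integrable q1 P := integrable_condExp
    have h1 : ∫ ω, ind1 ω * p0 ω ∂P = ∫ ω, (q0 * ind1) ω ∂P := by
      refine integral_congr_ae ?_
      filter_upwards [hp0] with ω hω
      simp [hω, mul_comm]
    have h2 : ∫ ω, ind0 ω * p1 ω ∂P = ∫ ω, (q1 * ind0) ω ∂P := by
      refine integral_congr_ae ?_
      filter_upwards [hp1] with ω hω
      simp [hω, mul_comm]
    have hq0ind1 : Integrable (q0 * ind1) P :=
      hq0int.bdd_mul hind1m.aestronglyMeasurable (c := 1) (ae_of_all _ fun ω => by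
        rw [Real.norm_eq_abs, abs_le]; constructor <;> [linarith [(hind1bd ω).1]; exact (hind1bd ω).2]) |>.congr
        (ae_of_all _ fun ω => by simp [mul_comm])
    have hq1ind0 : Integrable (q1 * ind0) P :=
      hq1int.bdd_mul hind0m.aestronglyMeasurable (c := 1) (ae_of_all _ fun ω => by
        rw [Real.norm_eq_abs, abs_le]; constructor <;> [linarith [(hind0bd ω).1]; exact (hind0bd ω).2]) |>.congr
        (ae_of_all _ fun ω => by simp [mul_comm])
    have e1 : ∫ ω, (q0 * ind1) ω ∂P = ∫ ω, (q0 * q1) ω ∂P := by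
      rw [← integral_condExp hm (f := q0 * ind1)]
      exact integral_congr_ae (condExp_mul_of_stronglyMeasurable_left hq0m hq0ind1 hind1int)
    have e2 : ∫ ω, (q1 * ind0) ω ∂P = ∫ ω, (q1 * q0) ω ∂P := by
      rw [← integral_condExp hm (f := q1 * ind0)]
      exact integral_congr_ae (condExp_mul_of_stronglyMeasurable_left hq1m hq1ind0 hind0int)
    rw [h1, h2, e1, e2]
    exact integral_congr_ae (ae_of_all _ fun ω => by simp [mul_comm])
  -- integrability of the integrands appearing in Q and Q'
  have hIntegrand : ∀ (a : Ω → ℝ), AEStronglyMeasurable a P → (∀ ω, 0 ≤ a ω ∧ a ω ≤ 1) →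
      ∀ (g : Ω → ℝ), Measurable g → (∀ ω, 0 ≤ g ω ∧ g ω ≤ 1) →
      Integrable (fun ω => a ω * g ω) P := by
    intro a ha habd g hg hgbd
    refine hInt _ (ha.mul hg.aestronglyMeasurable) fun ω => ?_
    rw [Real.norm_eq_abs, abs_le]
    constructor
    · nlinarith [(habd ω).1, (hgbd ω).1]
    · nlinarith [(habd ω).1, (habd ω).2, (hgbd ω).1, (hgbd ω).2]
  have ha1sm : AEStronglyMeasurable (fun ω => ind1 ω * p0 ω) P :=
    hind1m.aestronglyMeasurable.mul hp0sm
  have ha0sm : AEStronglyMeasurable (fun ω => ind0 ω * p1 ω) P :=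
    hind0m.aestronglyMeasurable.mul hp1sm
  have ha1bd : ∀ ω, 0 ≤ ind1 ω * p0 ω ∧ ind1 ω * p0 ω ≤ 1 := fun ω => by
    constructor
    · exact mul_nonneg (hind1bd ω).1 (hp0bd ω).1
    · nlinarith [(hind1bd ω).1, (hind1bd ω).2, (hp0bd ω).1, (hp0bd ω).2]
  have ha0bd : ∀ ω, 0 ≤ ind0 ω * p1 ω ∧ ind0 ω * p1 ω ≤ 1 := fun ω => by
    constructor
    · exact mul_nonneg (hind0bd ω).1 (hp1bd ω).1
    · nlinarith [(hind0bd ω).1, (hind0bd ω).2, (hp1bd ω).1, (hp1bd ω).2]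
  -- key pointwise and integral inequality, abstract form:
  -- for A, B ≥ 0 bounded and h ∈ [0,1]:
  -- ∫ B h + ∫ A (1-h)'² ... we prove both needed inequalities directly.
  -- the main claim A : Q h ≤ Q' h for admissible h
  have claimA : ∀ h : XZ × XF → ℝ, Measurable h → (∀ p, 0 ≤ h p ∧ h p ≤ 1) → Q h ≤ Q' h := by
    intro h hhm hhbd
    rw [hQ h, hQ' h]
    set H : Ω → ℝ := fun ω => h (Z ω, F ω) with hH
    have hHm : Measurable H := hhm.comp (hZ.prodMk hF)
    have hHbd : ∀ ω, 0 ≤ H ω ∧ H ω ≤ 1 := fun ω => hhbd _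
    have hH2bd : ∀ ω, 0 ≤ H ω ^ 2 ∧ H ω ^ 2 ≤ 1 := fun ω => by
      constructor <;> nlinarith [(hHbd ω).1, (hHbd ω).2]
    have h1mH2bd : ∀ ω, 0 ≤ (1 - H ω) ^ 2 ∧ (1 - H ω) ^ 2 ≤ 1 := fun ω => by
      constructor <;> nlinarith [(hHbd ω).1, (hHbd ω).2]
    have i1 : Integrable (fun ω => ind1 ω * p0 ω * H ω) P :=
      hIntegrand _ ha1sm ha1bd H hHm hHbd
    have i2 : Integrable (fun ω => ind0 ω * p1 ω * H ω) P :=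
      hIntegrand _ ha0sm ha0bd H hHm hHbd
    have i3 : Integrable (fun ω => ind1 ω * p0 ω * (1 - H ω) ^ 2) P :=
      hIntegrand _ ha1sm ha1bd _ (by fun_prop) h1mH2bd
    have i4 : Integrable (fun ω => ind0 ω * p1 ω * H ω ^ 2) P :=
      hIntegrand _ ha0sm ha0bd _ (by fun_prop) hH2bd
    have i5 : Integrable (fun ω => ind1 ω * p0 ω) P :=
      hInt _ ha1sm fun ω => by
        rw [Real.norm_eq_abs, abs_le]
        exact ⟨by linarith [(ha1bd ω).1], (ha1bd ω).2⟩
    have i13 : Integrable (fun ω => ind1 ω * p0 ω * H ω + ind1 ω * p0 ω * (1 - H ω) ^ 2) P :=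
      i1.add i3
    have eL1 : (∫ ω, ind1 ω * p0 ω * H ω ∂P) + (∫ ω, ind1 ω * p0 ω * (1 - H ω) ^ 2 ∂P)
        = ∫ ω, (ind1 ω * p0 ω * H ω + ind1 ω * p0 ω * (1 - H ω) ^ 2) ∂P :=
      (integral_add i1 i3).symm
    have eL2 : (∫ ω, (ind1 ω * p0 ω * H ω + ind1 ω * p0 ω * (1 - H ω) ^ 2) ∂P)
        + (∫ ω, ind0 ω * p1 ω * H ω ^ 2 ∂P)
        = ∫ ω, (ind1 ω * p0 ω * H ω + ind1 ω * p0 ω * (1 - H ω) ^ 2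
            + ind0 ω * p1 ω * H ω ^ 2) ∂P :=
      (integral_add i13 i4).symm
    have eR : (∫ ω, ind1 ω * p0 ω ∂P) + (∫ ω, ind0 ω * p1 ω * H ω ∂P)
        = ∫ ω, (ind1 ω * p0 ω + ind0 ω * p1 ω * H ω) ∂P := (integral_add i5 i2).symm
    have key : (∫ ω, (ind1 ω * p0 ω * H ω + ind1 ω * p0 ω * (1 - H ω) ^ 2
            + ind0 ω * p1 ω * H ω ^ 2) ∂P)
        ≤ ∫ ω, (ind1 ω * p0 ω + ind0 ω * p1 ω * H ω) ∂P := by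
      refine integral_mono (i13.add i4) (i5.add i2) fun ω => ?_
      have hA := (ha1bd ω).1
      have hB := (ha0bd ω).1
      have hh0 := (hHbd ω).1
      have hh1 := (hHbd ω).2
      have hprod : 0 ≤ H ω * (1 - H ω) := mul_nonneg hh0 (by linarith)
      simp only [Pi.add_apply]
      nlinarith [mul_nonneg hA hprod, mul_nonneg hB hprod]
    linarith [eL1, eL2, eR, key]
  -- claim B : -Q h ≤ Q' (1 - h) for admissible h
  have claimB : ∀ h : XZ × XF → ℝ, Measurable h → (∀ p, 0 ≤ h p ∧ h p ≤ 1) →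
      -Q h ≤ Q' (fun p => 1 - h p) := by
    intro h hhm hhbd
    rw [hQ h, hQ' (fun p => 1 - h p)]
    set H : Ω → ℝ := fun ω => h (Z ω, F ω) with hH
    have hHm : Measurable H := hhm.comp (hZ.prodMk hF)
    have hHbd : ∀ ω, 0 ≤ H ω ∧ H ω ≤ 1 := fun ω => hhbd _
    have hH2bd : ∀ ω, 0 ≤ (1 - (1 - H ω)) ^ 2 ∧ (1 - (1 - H ω)) ^ 2 ≤ 1 := fun ω => by
      constructor <;> nlinarith [(hHbd ω).1, (hHbd ω).2]
    have h1mH2bd : ∀ ω, 0 ≤ (1 - H ω) ^ 2 ∧ (1 - H ω) ^ 2 ≤ 1 := fun ω => by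
      constructor <;> nlinarith [(hHbd ω).1, (hHbd ω).2]
    have i1 : Integrable (fun ω => ind1 ω * p0 ω * H ω) P :=
      hIntegrand _ ha1sm ha1bd H hHm hHbd
    have i2 : Integrable (fun ω => ind0 ω * p1 ω * H ω) P :=
      hIntegrand _ ha0sm ha0bd H hHm hHbd
    have i3 : Integrable (fun ω => ind1 ω * p0 ω * (1 - (1 - H ω)) ^ 2) P :=
      hIntegrand _ ha1sm ha1bd _ (by fun_prop) hH2bd
    have i4 : Integrable (fun ω => ind0 ω * p1 ω * (1 - H ω) ^ 2) P :=
      hIntegrand _ ha0sm ha0bd _ (by fun_prop) h1mH2bd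
    have i5 : Integrable (fun ω => ind0 ω * p1 ω) P :=
      hInt _ ha0sm fun ω => by
        rw [Real.norm_eq_abs, abs_le]
        exact ⟨by linarith [(ha0bd ω).1], (ha0bd ω).2⟩
    have i23 : Integrable (fun ω => ind0 ω * p1 ω * H ω
        + ind1 ω * p0 ω * (1 - (1 - H ω)) ^ 2) P := i2.add i3
    have eL1 : (∫ ω, ind0 ω * p1 ω * H ω ∂P)
        + (∫ ω, ind1 ω * p0 ω * (1 - (1 - H ω)) ^ 2 ∂P)
        = ∫ ω, (ind0 ω * p1 ω * H ω + ind1 ω * p0 ω * (1 - (1 - H ω)) ^ 2) ∂P :=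
      (integral_add i2 i3).symm
    have eL2 : (∫ ω, (ind0 ω * p1 ω * H ω + ind1 ω * p0 ω * (1 - (1 - H ω)) ^ 2) ∂P)
        + (∫ ω, ind0 ω * p1 ω * (1 - H ω) ^ 2 ∂P)
        = ∫ ω, (ind0 ω * p1 ω * H ω + ind1 ω * p0 ω * (1 - (1 - H ω)) ^ 2
            + ind0 ω * p1 ω * (1 - H ω) ^ 2) ∂P :=
      (integral_add i23 i4).symm
    have eR : (∫ ω, ind0 ω * p1 ω ∂P) + (∫ ω, ind1 ω * p0 ω * H ω ∂P)
        = ∫ ω, (ind0 ω * p1 ω + ind1 ω * p0 ω * H ω) ∂P := (integral_add i5 i1).symm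
    have key : (∫ ω, (ind0 ω * p1 ω * H ω + ind1 ω * p0 ω * (1 - (1 - H ω)) ^ 2
            + ind0 ω * p1 ω * (1 - H ω) ^ 2) ∂P)
        ≤ ∫ ω, (ind0 ω * p1 ω + ind1 ω * p0 ω * H ω) ∂P := by
      refine integral_mono (i23.add i4) (i5.add i1) fun ω => ?_
      have hA := (ha1bd ω).1
      have hB := (ha0bd ω).1
      have hh0 := (hHbd ω).1
      have hh1 := (hHbd ω).2
      have hprod : 0 ≤ H ω * (1 - H ω) := mul_nonneg hh0 (by linarith)
      simp only [Pi.add_apply]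
      nlinarith [mul_nonneg hA hprod, mul_nonneg hB hprod]
    have hCkey' : (∫ ω, (if S ω = 1 then (1:ℝ) else 0) * p0 ω ∂P)
        = ∫ ω, ind0 ω * p1 ω ∂P := hCkey
    linarith [eL1, eL2, eR, key, hCkey']
  -- finish : bound the sup
  refine iSup_le fun h => iSup_le fun hh => ?_
  obtain ⟨hhm, hhL2, hhbd⟩ := hh
  rcases le_or_gt 0 (Q h) with hpos | hneg
  · refine le_trans ?_ (le_iSup₂_of_le h ⟨hhm, hhL2, hhbd⟩ le_rfl)
    rw [abs_of_nonneg hpos]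
    exact_mod_cast EReal.coe_le_coe_iff.mpr (claimA h hhm hhbd)
  · set g : XZ × XF → ℝ := fun p => 1 - h p with hg
    have hgm : Measurable g := measurable_const.sub hhm
    have hgbd : ∀ p, 0 ≤ g p ∧ g p ≤ 1 := fun p =>
      ⟨by simp only [hg]; linarith [(hhbd p).2], by simp only [hg]; linarith [(hhbd p).1]⟩
    have hgL2 : MemLp (fun ω => g (Z ω, F ω)) 2 P := by
      refine MemLp.of_bound ((hgm.comp (hZ.prodMk hF)).aestronglyMeasurable) 1
        (ae_of_all _ fun ω => ?_)
      rw [Real.norm_eq_abs, abs_le]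
      exact ⟨by linarith [(hgbd (Z ω, F ω)).1], (hgbd (Z ω, F ω)).2⟩
    refine le_trans ?_ (le_iSup₂_of_le g ⟨hgm, hgL2, hgbd⟩ le_rfl)
    rw [abs_of_neg hneg]
    exact_mod_cast EReal.coe_le_coe_iff.mpr (claimB h hhm hhbd)
end
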